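/- arXiv:1105.2685 — 6 statements merged into one kernel-verified Lean document; each statement's English description precedes it below -/
import Mathlib

section
/- Let U and V be real vector spaces and let Q : U → V be any mapping. Then Q satisfies 3Q(x−y) + 3Q(y−z) + 3Q(x−z) = Q(y+z−2x) + Q(x+z−2y) + Q(x+y−2z) for all x, y, z ∈ U if and only if Q is quadratic, i.e. Q(x+y) + Q(x−y) = 2Q(x) + 2Q(y) for all x, y ∈ U. -/
private def DD {U V : Type*} [AddCommGroup U] [AddCommGroup V] [Module ℝ V]
    (Q : U → V) (a b : U) : V :=
  Q (a + b) + Q (a - b) - (2 : ℝ) • Q a - (2 : ℝ) • Q b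

/-- A mapping `Q` between real vector spaces satisfies
`3Q(x−y) + 3Q(y−z) + 3Q(x−z) = Q(y+z−2x) + Q(x+z−2y) + Q(x+y−2z)` for all `x y z`
iff `Q` is quadratic. -/
theorem stmt_0 {U V : Type*} [AddCommGroup U] [Module ℝ U] [AddCommGroup V] [Module ℝ V]
    (Q : U → V) :
    (∀ x y z : U,
      (3 : ℕ) • Q (x - y) + (3 : ℕ) • Q (y - z) + (3 : ℕ) • Q (x - z)
        = Q (y + z - (2 : ℕ) • x) + Q (x + z - (2 : ℕ) • y) + Q (x + y - (2 : ℕ) • z)) ↔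
    (∀ x y : U, Q (x + y) + Q (x - y) = (2 : ℕ) • Q x + (2 : ℕ) • Q y) := by
  have cancel : ∀ (c : ℝ), c ≠ 0 → ∀ v : V, c • v = 0 → v = 0 := by
    intro c hc v hv
    have h2 := congrArg (fun w => c⁻¹ • w) hv
    simpa [smul_smul, inv_mul_cancel₀ hc] using h2
  constructor
  · intro h
    -- the clean form of the hypothesis
    have key : ∀ u v : U, (3 : ℕ) • Q u + (3 : ℕ) • Q v + (3 : ℕ) • Q (u + v)
        = Q (-(u + u + v)) + Q (u - v) + Q (u + v + v) := by
      intro u v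
      have h1 := h (u + v) v 0
      rw [show u + v - v = u by abel, show v - (0 : U) = v by abel,
        show u + v - (0 : U) = u + v by abel,
        show v + 0 - (2 : ℕ) • (u + v) = -(u + u + v) by abel,
        show u + v + 0 - (2 : ℕ) • v = u - v by abel,
        show u + v + v - (2 : ℕ) • (0 : U) = u + v + v by abel] at h1
      exact h1
    have hQ0 : Q 0 = 0 := by
      have h1 := key 0 0
      simp only [add_zero, neg_zero, sub_zero] at h1
      refine cancel 6 (by norm_num) _ ?_
      linear_combination (norm := module) h1
    have hm2 : ∀ u : U, Q (-(u + u)) = (4 : ℝ) • Q u := by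
      intro u
      have h1 := key u 0
      simp only [add_zero, sub_zero, hQ0, smul_zero] at h1
      linear_combination (norm := module) -h1
    have heven : ∀ u : U, Q (-u) = Q u := by
      intro u
      have h2 := key 0 u
      simp only [zero_add, zero_sub, hQ0, smul_zero] at h2
      have h3 := hm2 (-u)
      rw [show -(-u + -u) = u + u by abel] at h3
      have h4 : (6 : ℝ) • (Q (-u) - Q u) = 0 := by
        linear_combination (norm := module) -h2 - h3
      exact sub_eq_zero.mp (cancel 6 (by norm_num) _ h4)
    have h2x : ∀ u : U, Q (u + u) = (4 : ℝ) • Q u := by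
      intro u
      have h3 := hm2 u
      rw [heven (u + u)] at h3
      exact h3
    have hE : ∀ u v : U, Q (u + u + v) + Q (u - v) + Q (u + v + v)
        = (3 : ℕ) • Q u + (3 : ℕ) • Q v + (3 : ℕ) • Q (u + v) := by
      intro u v
      have h1 := key u v
      rw [heven (u + u + v)] at h1
      exact h1.symm
    have h3x : ∀ u : U, Q (u + u + u) = (9 : ℝ) • Q u := by
      intro u
      have h1 := hE u u
      rw [sub_self u, hQ0, h2x u] at h1
      linear_combination (norm := module) (1/2 : ℝ) • h1
    have hD2 : ∀ a b : U, DD Q (a + a) b + DD Q a (b + b) = (2 : ℝ) • DD Q a b := by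
      intro a b
      have e1 := hE a b
      have e2 := hE a (-b)
      have e3 := heven b
      have e4 := h2x a
      have e5 := h2x b
      simp only [DD]
      abel_nf at e1 e2 e3 e4 e5 ⊢
      linear_combination (norm := module) e1 + e2 + (3 : ℝ) • e3 - (2 : ℝ) • e4 - (2 : ℝ) • e5
    have hD3 : ∀ a b : U, DD Q (a + a + a) b = (3 : ℝ) • DD Q a b := by
      intro a b
      have e1 := hE (a + b) (a - b)
      have e2 := h2x a
      have e3 := h2x b
      have e4 := h3x a
      simp only [DD]
      abel_nf at e1 e2 e3 e4 ⊢
      linear_combination (norm := module) e1 + (3 : ℝ) • e2 - e3 - (2 : ℝ) • e4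
    have hD4 : ∀ a b : U, DD Q (a + a + a + a) b
        = (2 : ℝ) • DD Q (a + a) b - (4 : ℝ) • DD Q a b := by
      intro a b
      have e1 := hE (a + a) b
      have e2 := hE (a + a) (-b)
      have e3 := heven b
      have e4 := h2x (a + b)
      have e5 := h2x (a - b)
      have e6 := h2x (a + a)
      have e7 := h2x a
      simp only [DD]
      abel_nf at e1 e2 e3 e4 e5 e6 e7 ⊢
      linear_combination (norm := module) e1 + e2 + (3 : ℝ) • e3 - e4 - e5
        - (2 : ℝ) • e6 + (2 : ℝ) • e7
    have hD6 : ∀ a b : U, (3 : ℝ) • DD Q (a + a) b = DD Q (a + a + a) (b + b) := by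
      intro a b
      have e1 := hE a (a + b)
      have e2 := hE a (a - b)
      rw [show a - (a - b) = b by abel] at e2
      have e3 := hE (a + b) (a - b)
      have e4 := heven b
      have e5 := h2x a
      have e6 := h2x b
      have e7 := h3x a
      simp only [DD]
      abel_nf at e1 e2 e3 e4 e5 e6 e7 ⊢
      linear_combination (norm := module) -e1 - e2 + e3 + e4 - (3 : ℝ) • e5 + e6
        + (2 : ℝ) • e7
    have hDD : ∀ a b : U, DD Q a b = 0 := by
      intro a b
      have e1 := hD2 a b
      have e2 := hD2 (a + a) b
      rw [show a + a + (a + a) = a + a + a + a by abel] at e2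
      have e3 := hD3 a (b + b)
      have e4 := hD3 (a + a) (b + b)
      rw [show a + a + (a + a) + (a + a) = a + a + a + a + a + a by abel] at e4
      have e5 := hD6 a b
      have e6 := hD6 (a + a) b
      rw [show a + a + (a + a) = a + a + a + a by abel,
        show a + a + a + a + (a + a) = a + a + a + a + a + a by abel] at e6
      have e7 := hD4 a b
      linear_combination (norm := module) (1/6 : ℝ) • e1 - (1/6 : ℝ) • e2
        + (1/18 : ℝ) • e3 - (1/18 : ℝ) • e4 + (1/18 : ℝ) • e5 - (1/18 : ℝ) • e6
        + (1/3 : ℝ) • e7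
    intro x y
    have h1 := hDD x y
    simp only [DD] at h1
    linear_combination (norm := module) h1
  · intro h x y z
    have h00 := h 0 0
    rw [show (0 : U) + 0 = 0 by abel, show (0 : U) - 0 = 0 by abel] at h00
    have hQ0 : Q 0 = 0 := by
      refine cancel 2 (by norm_num) _ ?_
      linear_combination (norm := module) -h00
    have h1 := h (x - z) (x - y)
    rw [show x - z + (x - y) = x + x - y - z by abel,
      show x - z - (x - y) = y - z by abel] at h1
    have h2 := h (x - z) (y - z)
    rw [show x - z + (y - z) = x + y - (2 : ℕ) • z by abel,
      show x - z - (y - z) = x - y by abel] at h2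
    have h3 := h (x - y) (y - z)
    rw [show x - y + (y - z) = x - z by abel,
      show x - y - (y - z) = x + z - (2 : ℕ) • y by abel] at h3
    have he := h 0 (x + x - y - z)
    rw [show (0 : U) + (x + x - y - z) = x + x - y - z by abel,
      show (0 : U) - (x + x - y - z) = y + z - (2 : ℕ) • x by abel,
      hQ0, smul_zero] at he
    linear_combination (norm := module) -h1 - h2 - h3 - he
end

section
/- Let n ≥ 3 be an integer, let U and V be real vector spaces, and suppose Q : U → V satisfies equation (E_n). Then Q is even, i.e. Q(−x) = Q(x) for all x ∈ U, and Q((n−1)^k · x) = (n−1)^{2k} · Q(x) for every x ∈ U and every natural number k. -/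
lemma fin_sum_split {n : ℕ} [NeZero n] (hn : 3 ≤ n) {V : Type*} [AddCommMonoid V]
    (g : Fin n → V) (c : V) (hg : ∀ i : Fin n, i ≠ 0 → i ≠ 1 → g i = c) :
    ∑ i, g i = g 0 + g 1 + (n - 2) • c := by
  have hv1 : (1 : Fin n).val = 1 := by
    rw [Fin.val_one', Nat.mod_eq_of_lt (by omega)]
  have h01 : (0 : Fin n) ≠ 1 := by
    simp only [Ne, Fin.ext_iff, Fin.val_zero, hv1]
    omega
  have h1mem : (1 : Fin n) ∈ Finset.univ.erase (0 : Fin n) :=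
    Finset.mem_erase.mpr ⟨h01.symm, Finset.mem_univ _⟩
  rw [← Finset.add_sum_erase _ g (Finset.mem_univ (0 : Fin n)),
      ← Finset.add_sum_erase _ g h1mem]
  have hc : ∑ i ∈ (Finset.univ.erase (0 : Fin n)).erase 1, g i = (n - 2) • c := by
    rw [Finset.sum_congr rfl (fun i hi => ?_), Finset.sum_const]
    · congr 1
      rw [Finset.card_erase_of_mem h1mem, Finset.card_erase_of_mem (Finset.mem_univ _),
        Finset.card_univ, Fintype.card_fin]
      omega
    · simp only [Finset.mem_erase, Finset.mem_univ, and_true] at hi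
      exact hg i hi.2 hi.1
  rw [hc]
  exact (add_assoc _ _ _).symm


/-- Equation (E_n): `n·∑_{1≤i<j≤n} Q(x_i − x_j) = ∑_{i=1}^{n} Q((∑_{j=1}^{n} x_j) − n·x_i)`. -/
def SatisfiesEn {U V : Type*} [AddCommGroup U] [AddCommGroup V] (n : ℕ) (Q : U → V) : Prop :=
  ∀ x : Fin n → U,
    n • ∑ p ∈ Finset.univ.filter (fun p : Fin n × Fin n => p.1 < p.2), Q (x p.1 - x p.2)
      = ∑ i : Fin n, Q ((∑ j : Fin n, x j) - n • x i)

/-- If `Q` between real vector spaces satisfies equation (E_n) for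
an integer `n ≥ 3`, then `Q` is even and `Q((n−1)^k·x) = (n−1)^{2k}·Q(x)`. -/
theorem stmt_1 {U V : Type*} [AddCommGroup U] [Module ℝ U] [AddCommGroup V] [Module ℝ V]
    (n : ℕ) (hn : 3 ≤ n) (Q : U → V) (hQ : SatisfiesEn n Q) :
    (∀ x : U, Q (-x) = Q x) ∧
    (∀ (x : U) (k : ℕ), Q (((n - 1) ^ k : ℕ) • x) = ((n - 1) ^ (2 * k) : ℕ) • Q x) := by
  obtain ⟨m, rfl⟩ : ∃ m, n = m + 3 := ⟨n - 3, by omega⟩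
  haveI : NeZero (m + 3) := ⟨by omega⟩
  unfold SatisfiesEn at hQ
  -- basic Fin facts
  have hv1 : (1 : Fin (m+3)).val = 1 := by
    rw [Fin.val_one', Nat.mod_eq_of_lt (by omega)]
  have h01 : (0 : Fin (m+3)) ≠ 1 := by
    simp only [Ne, Fin.ext_iff, Fin.val_zero, hv1]; omega
  have h0lt1 : (0 : Fin (m+3)) < 1 := by
    simp only [Fin.lt_def, Fin.val_zero, hv1]; omega
  -- cancellation of (m+3) • on V
  have hcancel : ∀ v w : V, (m+3) • v = (m+3) • w → v = w := by
    intro v w h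
    rw [← Nat.cast_smul_eq_nsmul ℝ, ← Nat.cast_smul_eq_nsmul ℝ] at h
    have h3 : ((m+3 : ℕ) : ℝ) ≠ 0 := by positivity
    calc v = ((m+3 : ℕ) : ℝ)⁻¹ • (((m+3 : ℕ) : ℝ) • v) := (inv_smul_smul₀ h3 _).symm
      _ = ((m+3 : ℕ) : ℝ)⁻¹ • (((m+3 : ℕ) : ℝ) • w) := by rw [h]
      _ = w := inv_smul_smul₀ h3 _
  -- Q 0 = 0
  have hQ0 : Q 0 = 0 := by
    have h := hQ (fun _ => 0)
    simp only [sub_self, Finset.sum_const_zero, smul_zero, sub_zero] at h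
    rw [Finset.sum_const, Finset.sum_const, Finset.card_univ, Fintype.card_fin,
      smul_smul] at h
    set K := (Finset.univ.filter (fun p : Fin (m+3) × Fin (m+3) => p.1 < p.2)).card with hKdef
    have hK : 2 ≤ K := by
      refine Finset.one_lt_card.mpr ⟨((0 : Fin (m+3)), (1 : Fin (m+3))), ?_,
        ((0 : Fin (m+3)), (⟨2, by omega⟩ : Fin (m+3))), ?_, ?_⟩
      · exact Finset.mem_filter.mpr ⟨Finset.mem_univ _, h0lt1⟩
      · refine Finset.mem_filter.mpr ⟨Finset.mem_univ _, ?_⟩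
        simp only [Fin.lt_def, Fin.val_zero]; omega
      · intro hcontra
        have := congrArg (fun p : Fin (m+3) × Fin (m+3) => (p.2 : ℕ)) hcontra
        simp only [hv1] at this
        omega
    obtain ⟨K', hK'⟩ : ∃ K', K = K' + 2 := ⟨K - 2, by omega⟩
    rw [hK'] at h
    rw [show (m+3) * (K' + 2) = ((m+3) * K' + (m+3)) + (m+3) by ring, add_smul] at h
    have h0 : ((m+3) * K' + (m+3)) • Q 0 = 0 := by
      exact add_eq_right.mp h
    rw [← Nat.cast_smul_eq_nsmul ℝ] at h0
    have hc : (((m+3) * K' + (m+3) : ℕ) : ℝ) ≠ 0 := by positivity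
    calc Q 0 = (((m+3) * K' + (m+3) : ℕ) : ℝ)⁻¹ • ((((m+3) * K' + (m+3) : ℕ) : ℝ) • Q 0) :=
          (inv_smul_smul₀ hc _).symm
      _ = 0 := by rw [h0, smul_zero]
  -- the key two-variable instance
  have key : ∀ a b : U,
      (m+3) • (Q (a - b) + ((m+1) • Q a + (m+1) • Q b))
        = Q (a + b - (m+3) • a) + Q (a + b - (m+3) • b) + (m+1) • Q (a + b) := by
    intro a b
    set x : Fin (m+3) → U := fun i => if i = 0 then a else if i = 1 then b else 0 with hxdef
    have hx0 : x 0 = a := by simp [hxdef]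
    have hx1 : x 1 = b := by simp [hxdef, h01.symm]
    have hxo : ∀ i : Fin (m+3), i ≠ 0 → i ≠ 1 → x i = 0 := by
      intro i hi0 hi1; simp [hxdef, hi0, hi1]
    have h := hQ x
    have hsum : ∑ j, x j = a + b := by
      rw [fin_sum_split (by omega) x 0 hxo, hx0, hx1]
      show a + b + (m + 1) • (0 : U) = a + b
      rw [smul_zero, add_zero]
    -- facts about strict order and the two special indices
    have hgt0 : ∀ j : Fin (m+3), j ≠ 0 → (0 : Fin (m+3)) < j := fun j hj =>
      Fin.pos_of_ne_zero hj
    have hgt1 : ∀ j : Fin (m+3), j ≠ 0 → j ≠ 1 → (1 : Fin (m+3)) < j := by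
      intro j hj0 hj1
      have hv0 : (j : ℕ) ≠ 0 := fun hc => hj0 (Fin.ext (by simp [hc]))
      have hv1' : (j : ℕ) ≠ 1 := fun hc => hj1 (Fin.ext (by simp [hc, hv1]))
      simp only [Fin.lt_def, hv1]; omega
    -- row 0
    have hrow0 : (∑ j : Fin (m+3), if (0 : Fin (m+3)) < j then Q (x 0 - x j) else 0)
        = Q (a - b) + (m+1) • Q a := by
      have hgo : ∀ j : Fin (m+3), j ≠ 0 → j ≠ 1 →
          (if (0 : Fin (m+3)) < j then Q (x 0 - x j) else 0) = Q a := by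
        intro j hj0 hj1
        rw [if_pos (hgt0 j hj0), hx0, hxo j hj0 hj1, sub_zero]
      calc (∑ j : Fin (m+3), if (0 : Fin (m+3)) < j then Q (x 0 - x j) else 0)
          = (if (0:Fin (m+3)) < 0 then Q (x 0 - x 0) else 0)
            + (if (0:Fin (m+3)) < 1 then Q (x 0 - x 1) else 0) + (m+1) • Q a :=
            fin_sum_split (by omega) _ (Q a) hgo
        _ = Q (a - b) + (m+1) • Q a := by
            rw [if_neg (lt_irrefl _), if_pos h0lt1, hx0, hx1, zero_add]
    -- row 1
    have hrow1 : (∑ j : Fin (m+3), if (1 : Fin (m+3)) < j then Q (x 1 - x j) else 0)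
        = (m+1) • Q b := by
      have hgo : ∀ j : Fin (m+3), j ≠ 0 → j ≠ 1 →
          (if (1 : Fin (m+3)) < j then Q (x 1 - x j) else 0) = Q b := by
        intro j hj0 hj1
        rw [if_pos (hgt1 j hj0 hj1), hx1, hxo j hj0 hj1, sub_zero]
      calc (∑ j : Fin (m+3), if (1 : Fin (m+3)) < j then Q (x 1 - x j) else 0)
          = (if (1:Fin (m+3)) < 0 then Q (x 1 - x 0) else 0)
            + (if (1:Fin (m+3)) < 1 then Q (x 1 - x 1) else 0) + (m+1) • Q b :=
            fin_sum_split (by omega) _ (Q b) hgo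
        _ = (m+1) • Q b := by
            rw [if_neg (by simp [Fin.lt_def]), if_neg (lt_irrefl _), zero_add, zero_add]
    -- other rows vanish
    have hrowo : ∀ i : Fin (m+3), i ≠ 0 → i ≠ 1 →
        (∑ j : Fin (m+3), if i < j then Q (x i - x j) else 0) = 0 := by
      intro i hi0 hi1
      refine Finset.sum_eq_zero fun j _ => ?_
      by_cases hij : i < j
      · have hij' : (1 : Fin (m+3)) < j := lt_trans (hgt1 i hi0 hi1) hij
        have hj0 : j ≠ 0 := by
          intro hc; rw [hc] at hij'; exact absurd hij' (by simp [Fin.lt_def])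
        have hj1 : j ≠ 1 := fun hc => absurd (hc ▸ hij') (lt_irrefl _)
        rw [if_pos hij, hxo i hi0 hi1, hxo j hj0 hj1, sub_zero, hQ0]
      · rw [if_neg hij]
    -- full left-hand sum
    have hL : ∑ p ∈ Finset.univ.filter (fun p : Fin (m+3) × Fin (m+3) => p.1 < p.2),
        Q (x p.1 - x p.2) = Q (a - b) + ((m+1) • Q a + (m+1) • Q b) := by
      calc ∑ p ∈ Finset.univ.filter (fun p : Fin (m+3) × Fin (m+3) => p.1 < p.2),
            Q (x p.1 - x p.2)
          = ∑ i : Fin (m+3), ∑ j : Fin (m+3), (if i < j then Q (x i - x j) else 0) := by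
            rw [Finset.sum_filter, Fintype.sum_prod_type]
        _ = (∑ j : Fin (m+3), if (0 : Fin (m+3)) < j then Q (x 0 - x j) else 0)
            + (∑ j : Fin (m+3), if (1 : Fin (m+3)) < j then Q (x 1 - x j) else 0)
            + (m+1) • (0 : V) :=
            fin_sum_split (by omega) (fun i => ∑ j : Fin (m+3), if i < j then Q (x i - x j) else 0)
              0 hrowo
        _ = Q (a - b) + ((m+1) • Q a + (m+1) • Q b) := by
            rw [hrow0, hrow1, smul_zero, add_zero, add_assoc]
    -- full right-hand sum
    have hR : ∑ i : Fin (m+3), Q ((∑ j : Fin (m+3), x j) - (m+3) • x i)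
        = Q (a + b - (m+3) • a) + Q (a + b - (m+3) • b) + (m+1) • Q (a + b) := by
      have hgo : ∀ i : Fin (m+3), i ≠ 0 → i ≠ 1 →
          Q ((∑ j : Fin (m+3), x j) - (m+3) • x i) = Q (a + b) := by
        intro i hi0 hi1
        rw [hxo i hi0 hi1, smul_zero, sub_zero, hsum]
      calc ∑ i : Fin (m+3), Q ((∑ j : Fin (m+3), x j) - (m+3) • x i)
          = Q ((∑ j : Fin (m+3), x j) - (m+3) • x 0) + Q ((∑ j : Fin (m+3), x j) - (m+3) • x 1)
            + (m+1) • Q (a + b) := fin_sum_split (by omega) _ (Q (a+b)) hgo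
        _ = Q (a + b - (m+3) • a) + Q (a + b - (m+3) • b) + (m+1) • Q (a + b) := by
            rw [hsum, hx0, hx1]
    rw [hL, hR] at h
    exact h
  -- evenness
  have hdouble : ∀ a : U, Q (a + a) = Q (-(a + a)) := by
    intro a
    have h1 := key a (-a)
    have h2 := key (-a) a
    rw [sub_neg_eq_add, add_neg_cancel] at h1
    rw [show -a - a = -(a + a) by abel, neg_add_cancel] at h2
    simp only [hQ0, smul_zero, add_zero, zero_sub, smul_neg, neg_neg] at h1 h2
    -- h1 : (m+3) • (Q (a+a) + ((m+1)•Q a + (m+1)•Q (-a))) = Q (-((m+3)•a)) + Q ((m+3)•a)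
    -- h2 : (m+3) • (Q (-(a+a)) + ((m+1)•Q (-a) + (m+1)•Q a)) = Q ((m+3)•a) + Q (-((m+3)•a))
    rw [add_comm ((m+1) • Q (-a)) ((m+1) • Q a)] at h2
    have h3 : (m+3) • (Q (a + a) + ((m+1) • Q a + (m+1) • Q (-a)))
        = (m+3) • (Q (-(a + a)) + ((m+1) • Q a + (m+1) • Q (-a))) := by
      rw [h1, h2, add_comm]
    have h4 := hcancel _ _ h3
    exact add_right_cancel h4
  have heven : ∀ y : U, Q (-y) = Q y := by
    intro y
    have h := hdouble ((2⁻¹ : ℝ) • y)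
    have hy : (2⁻¹ : ℝ) • y + (2⁻¹ : ℝ) • y = y := by
      rw [← add_smul]; norm_num
    rw [hy] at h
    exact h.symm
  -- scaling
  have hscale : ∀ a : U, Q ((m+2) • a) = ((m+2)^2) • Q a := by
    intro a
    have h := key a 0
    simp only [sub_zero, add_zero, smul_zero, hQ0] at h
    have e : a - (m+3) • a = -((m+2) • a) := by
      rw [show (m+3) = (m+2) + 1 from rfl, succ_nsmul]
      abel
    rw [e, heven] at h
    have c1 : Q a + (m+1) • Q a = (m+2) • Q a := by
      rw [show ((m+2) • Q a : V) = (m+1) • Q a + Q a from succ_nsmul _ _, add_comm]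
    rw [c1, smul_smul, add_assoc, c1,
      show (m+3) * (m+2) = (m+2)^2 + (m+2) by ring, add_smul] at h
    exact (add_right_cancel h).symm
  refine ⟨heven, ?_⟩
  have hmain : ∀ (k : ℕ) (x : U), Q (((m+2) ^ k) • x) = ((m+2) ^ (2 * k)) • Q x := by
    intro k
    induction k with
    | zero => intro x; simp
    | succ k ih =>
      intro x
      rw [pow_succ, mul_smul, ih ((m+2) • x), hscale, smul_smul, ← pow_add,
        show 2 * (k + 1) = 2 * k + 2 by omega]
  intro x k
  rw [show m + 3 - 1 = m + 2 by omega]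
  exact hmain k x
end

section
/- Let U and V be real vector spaces and let a be an integer with |a| ≠ 1. A mapping Q : U → V satisfies Q(ax+y) + Q(x+ay) + (a−1)Q(x−y) = (a+1)Q(x+y) + (a²−1)(Q(x) + Q(y)) for all x, y ∈ U if and only if Q is quadratic, i.e. Q(x+y) + Q(x−y) = 2Q(x) + 2Q(y) for all x, y ∈ U. -/
set_option maxHeartbeats 2000000 in
/-- For an integer `a` with `|a| ≠ 1`, a mapping `Q` between real vector
spaces satisfies `Q(ax+y) + Q(x+ay) + (a−1)Q(x−y) = (a+1)Q(x+y) + (a²−1)(Q(x)+Q(y))`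
for all `x, y` iff `Q` is quadratic. -/
theorem stmt_2 {U V : Type*} [AddCommGroup U] [Module ℝ U] [AddCommGroup V] [Module ℝ V]
    (a : ℤ) (ha : |a| ≠ 1) (Q : U → V) :
    (∀ x y : U,
      Q (a • x + y) + Q (x + a • y) + (a - 1) • Q (x - y)
        = (a + 1) • Q (x + y) + (a ^ 2 - 1) • (Q x + Q y)) ↔
    (∀ x y : U, Q (x + y) + Q (x - y) = (2 : ℕ) • Q x + (2 : ℕ) • Q y) := by
  have ha1 : a ≠ 1 := by rintro rfl; simp at ha
  have ham1 : a ≠ -1 := by rintro rfl; simp at ha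
  have hb1 : (a:ℝ) - 1 ≠ 0 := sub_ne_zero.mpr (by exact_mod_cast ha1)
  have hb2 : (a:ℝ) + 1 ≠ 0 := by
    intro hcon
    apply ham1
    have : (a:ℝ) = -1 := by linarith
    exact_mod_cast this
  have cancel : ∀ (c : ℝ), c ≠ 0 → ∀ v w : V, c • v = c • w → v = w := by
    intro c hc v w hvw
    have := congrArg (fun z => c⁻¹ • z) hvw
    simpa [inv_smul_smul₀ hc] using this
  have hbsq : (a:ℝ) ^ 2 - 1 ≠ 0 := by
    intro hcon
    apply mul_ne_zero hb1 hb2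
    linear_combination hcon
  constructor
  · intro h x y
    have hR : ∀ u v : U, Q ((a:ℝ) • u + v) + Q (u + (a:ℝ) • v) + ((a:ℝ) - 1) • Q (u - v)
        = ((a:ℝ) + 1) • Q (u + v) + ((a:ℝ) ^ 2 - 1) • (Q u + Q v) := by
      intro u v
      have h' := h u v
      rw [← Int.cast_smul_eq_zsmul ℝ a u, ← Int.cast_smul_eq_zsmul ℝ a v,
          ← Int.cast_smul_eq_zsmul ℝ (a-1), ← Int.cast_smul_eq_zsmul ℝ (a+1),
          ← Int.cast_smul_eq_zsmul ℝ (a^2-1)] at h'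
      push_cast at h'
      exact h'
    have hQ0 : Q (0:U) = 0 := by
      have t := hR 0 0
      simp only [smul_zero, add_zero, sub_zero] at t
      have h2 : (2*((a:ℝ) ^ 2 - 1)) • Q (0:U) = (2*((a:ℝ) ^ 2 - 1)) • (0:V) := by
        rw [smul_zero]
        linear_combination (norm := module) -t
      exact cancel _ (by intro hc; apply hbsq; linarith) _ _ h2
    have heven : ∀ z : U, Q (-z) = Q z := by
      intro z
      have A := hR z 0
      have B := hR 0 z
      simp only [smul_zero, add_zero, zero_add, sub_zero, zero_sub] at A B
      have hc : ((a:ℝ) - 1) • Q (-z) = ((a:ℝ) - 1) • Q z := by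
        linear_combination (norm := module) B - A
      exact cancel _ hb1 _ _ hc
    have hsa : ∀ w : U, Q ((a:ℝ) • w) = (a:ℝ) ^ 2 • Q w := by
      intro w
      have t := hR w 0
      simp only [smul_zero, add_zero, sub_zero] at t
      rw [hQ0] at t
      linear_combination (norm := module) t
    have htwo : ∀ z : U, Q ((2:ℝ) • z) = (4:ℝ) • Q z := by
      intro z
      have key1 : ∀ p r : ℝ,
          Q (((a:ℝ)*p+r) • z) + Q ((p+(a:ℝ)*r) • z) + ((a:ℝ) - 1) • Q ((p-r) • z)
            = ((a:ℝ) + 1) • Q ((p+r) • z) + ((a:ℝ) ^ 2 - 1) • (Q (p • z) + Q (r • z)) := by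
        intro p r
        have t := hR (p • z) (r • z)
        rw [show (a:ℝ) • (p • z) + r • z = ((a:ℝ)*p+r) • z by module,
            show p • z + (a:ℝ) • (r • z) = (p+(a:ℝ)*r) • z by module,
            show p • z - r • z = (p-r) • z by module,
            show p • z + r • z = (p+r) • z by module] at t
        exact t
      have evenZ : ∀ c : ℝ, Q ((-c) • z) = Q (c • z) := by
        intro c
        rw [show (-c) • z = -(c • z) by module]
        exact heven _
      have saZ : ∀ c : ℝ, Q (((a:ℝ)*c) • z) = (a:ℝ) ^ 2 • Q (c • z) := by
        intro c
        rw [show ((a:ℝ)*c) • z = (a:ℝ) • (c • z) by module]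
        exact hsa _
      have zeroZ : Q ((0:ℝ) • z) = 0 := by
        rw [show (0:ℝ) • z = (0:U) by module]
        exact hQ0
      have main1 : (((a:ℝ) ^ 2 - 1) ^ 2) • Q ((2:ℝ) • z)
          = (((a:ℝ) ^ 2 - 1) ^ 2) • ((4:ℝ) • Q ((1:ℝ) • z)) := by
        have K1 := evenZ ((-1 : ℝ))
        have K2 := evenZ ((-2 : ℝ))
        have K3 := evenZ ((-1) * (a:ℝ)^1)
        have K4 := saZ ((-1 : ℝ))
        have K5 := key1 ((1) * (a:ℝ)^1) ((-1) * (a:ℝ)^1 + (1))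
        have K6 := evenZ ((1) * (a:ℝ)^1 + (-1))
        have K7 := evenZ ((1) * (a:ℝ)^2 + (-2) * (a:ℝ)^1)
        have K8 := saZ ((1) * (a:ℝ)^1 + (-2))
        have K9 := key1 ((1 : ℝ)) ((-2 : ℝ))
        have K10 := evenZ ((2) * (a:ℝ)^1 + (-1))
        have K11 := key1 ((1 : ℝ)) ((1) * (a:ℝ)^1 + (-1))
        have K12 := evenZ ((1) * (a:ℝ)^1 + (-2))
        have K13 := key1 ((1 : ℝ)) ((1 : ℝ))
        have K14 := evenZ ((-1) * (a:ℝ)^1 + (-1))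
        have K15 := key1 ((1) * (a:ℝ)^1) ((1) * (a:ℝ)^1 + (-1))
        have K16 := evenZ ((-1) * (a:ℝ)^2)
        have K17 := saZ ((-1) * (a:ℝ)^1)
        have K18 := key1 ((1 : ℝ)) ((-1) * (a:ℝ)^1 + (-1))
        have K19 := evenZ ((1) * (a:ℝ)^2 + (1) * (a:ℝ)^1 + (-1))
        have K20 := key1 ((1 : ℝ)) ((-1 : ℝ))
        have K21 := key1 ((1) * (a:ℝ)^1) ((1) * (a:ℝ)^1 + (1))
        have K22 := evenZ ((-1) * (a:ℝ)^2 + (-2) * (a:ℝ)^1)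
        have K23 := saZ ((-1) * (a:ℝ)^1 + (-2))
        have K24 := key1 ((1 : ℝ)) ((1) * (a:ℝ)^1 + (1))
        have K25 := evenZ ((-1) * (a:ℝ)^1 + (-2))
        have K26 := key1 ((1 : ℝ)) ((2 : ℝ))
        have K27 := key1 ((1) * (a:ℝ)^1) ((1) * (a:ℝ)^1 + (2))
        have K28 := evenZ ((1) * (a:ℝ)^2 + (3) * (a:ℝ)^1)
        have K29 := saZ ((-1) * (a:ℝ)^1 + (-3))
        have K30 := key1 ((2 : ℝ)) ((1) * (a:ℝ)^1 + (1))
        have K31 := evenZ ((-1) * (a:ℝ)^1 + (-3))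
        have K32 := key1 ((2 : ℝ)) ((2 : ℝ))
        have K33 := key1 ((1 : ℝ)) ((3 : ℝ))
        have K34 := key1 ((1) * (a:ℝ)^1) ((2) * (a:ℝ)^1 + (1))
        have K35 := evenZ ((2) * (a:ℝ)^2 + (2) * (a:ℝ)^1)
        have K36 := saZ ((-2) * (a:ℝ)^1 + (-2))
        have K37 := key1 ((1 : ℝ)) ((1) * (a:ℝ)^1 + (2))
        have K38 := evenZ ((-2) * (a:ℝ)^1 + (-2))
        have K39 := key1 ((1) * (a:ℝ)^1) ((1) * (a:ℝ)^1 + (-2))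
        have K40 := saZ ((1) * (a:ℝ)^1 + (-1))
        have K41 := key1 ((2 : ℝ)) ((-2 : ℝ))
        have K42 := evenZ ((2) * (a:ℝ)^1 + (-2))
        have K43 := key1 ((2 : ℝ)) ((-1) * (a:ℝ)^1 + (-1))
        have K44 := evenZ ((1) * (a:ℝ)^2 + (1) * (a:ℝ)^1 + (-2))
        have K45 := zeroZ
        ring_nf at K1 K2 K3 K4 K5 K6 K7 K8 K9 K10 K11 K12 K13 K14 K15 K16 K17 K18 K19 K20 K21 K22 K23 K24 K25 K26 K27 K28 K29 K30 K31 K32 K33 K34 K35 K36 K37 K38 K39 K40 K41 K42 K43 K44 K45 ⊢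
        linear_combination (norm := module)
            ((1/6) * (a:ℝ)^7 + (5/6) * (a:ℝ)^6 + (1/6) * (a:ℝ)^5 + (-13/3) * (a:ℝ)^4 + (5/6) * (a:ℝ)^3 + (25/6) * (a:ℝ)^2 + (-23/6) * (a:ℝ)^1 + (-2)) • K1 +
            ((-1/4) * (a:ℝ)^6 + (-1/12) * (a:ℝ)^5 + (1/2) * (a:ℝ)^4 + (-5/6) * (a:ℝ)^3 + (1/12) * (a:ℝ)^2 + (-5/12) * (a:ℝ)^1 + (1)) • K2 +
            ((-1/6) * (a:ℝ)^5 + (-5/6) * (a:ℝ)^4 + (1/3) * (a:ℝ)^3 + (10/3) * (a:ℝ)^2 + (11/6) * (a:ℝ)^1 + (-1/2)) • K3 +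
            ((-1/3) * (a:ℝ)^5 + (-5/6) * (a:ℝ)^4 + (-1/2) * (a:ℝ)^3 + (13/6) * (a:ℝ)^2 + (-1/2) * (a:ℝ)^1 + (-2)) • K4 +
            ((-1/6) * (a:ℝ)^3 + (-1/2) * (a:ℝ)^2 + (-5/6) * (a:ℝ)^1 + (-1/2)) • K5 +
            ((-1/3) * (a:ℝ)^5 + (-1/3) * (a:ℝ)^4 + (-1) * (a:ℝ)^3 + (-1/2) * (a:ℝ)^2 + (4/3) * (a:ℝ)^1 + (3/2)) • K6 +
            ((1/6) * (a:ℝ)^3 + (1/2) * (a:ℝ)^2 + (5/6) * (a:ℝ)^1 + (1/2)) • K7 +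
            ((1/6) * (a:ℝ)^3 + (1/2) * (a:ℝ)^2 + (5/6) * (a:ℝ)^1 + (1/2)) • K8 +
            ((1/3) * (a:ℝ)^4 + (1/6) * (a:ℝ)^3 + (1/6) * (a:ℝ)^2 + (5/6) * (a:ℝ)^1 + (1/2)) • K9 +
            ((-1/3) * (a:ℝ)^4 + (-1/6) * (a:ℝ)^3 + (-1/6) * (a:ℝ)^2 + (-5/6) * (a:ℝ)^1 + (-1/2)) • K10 +
            ((1/6) * (a:ℝ)^3 + (1/2) * (a:ℝ)^2 + (5/6) * (a:ℝ)^1 + (1/2)) • K11 +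
            ((-1/6) * (a:ℝ)^4 + (-1/3) * (a:ℝ)^3 + (-1/3) * (a:ℝ)^2 + (1/3) * (a:ℝ)^1 + (1/2)) • K12 +
            ((1/6) * (a:ℝ)^4 + (-2/3) * (a:ℝ)^2 + (1/2)) • K13 +
            ((-1/6) * (a:ℝ)^4 + (5/3) * (a:ℝ)^2 + (-3/2)) • K14 +
            ((1/6) * (a:ℝ)^3 + (-1/6) * (a:ℝ)^2 + (1/2) * (a:ℝ)^1 + (3/2)) • K15 +
            ((-1/6) * (a:ℝ)^3 + (1/6) * (a:ℝ)^2 + (-1/2) * (a:ℝ)^1 + (-3/2)) • K16 +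
            ((-1/6) * (a:ℝ)^3 + (1/6) * (a:ℝ)^2 + (-1/2) * (a:ℝ)^1 + (-3/2)) • K17 +
            ((-1/6) * (a:ℝ)^3 + (1/6) * (a:ℝ)^2 + (-1/2) * (a:ℝ)^1 + (-3/2)) • K18 +
            ((1/6) * (a:ℝ)^3 + (-1/6) * (a:ℝ)^2 + (1/2) * (a:ℝ)^1 + (3/2)) • K19 +
            ((1/6) * (a:ℝ)^5 + (1/3) * (a:ℝ)^3 + (7/6) * (a:ℝ)^2 + (-1/2) * (a:ℝ)^1 + (-1/2)) • K20 +
            ((-1/3) * (a:ℝ)^2 + (1/3) * (a:ℝ)^1) • K21 +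
            ((1/3) * (a:ℝ)^2 + (-1/3) * (a:ℝ)^1) • K22 +
            ((1/3) * (a:ℝ)^2 + (-1/3) * (a:ℝ)^1) • K23 +
            ((1/3) * (a:ℝ)^2 + (-1/3) * (a:ℝ)^1) • K24 +
            ((-1/3) * (a:ℝ)^4 + (1/3) * (a:ℝ)^3) • K25 +
            ((1/6) * (a:ℝ)^4 + (-1/3) * (a:ℝ)^3 + (2/3) * (a:ℝ)^1 + (-1/2)) • K26 +
            ((-1/6) * (a:ℝ)^2 + (-1/2)) • K27 +
            ((-1/6) * (a:ℝ)^2 + (-1/2)) • K28 +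
            ((1/6) * (a:ℝ)^2 + (1/2)) • K29 +
            ((1/6) * (a:ℝ)^2 + (1/2)) • K30 +
            ((-1/6) * (a:ℝ)^4 + (-1/2) * (a:ℝ)^2) • K31 +
            ((-1/12) * (a:ℝ)^4 + (-1/12) * (a:ℝ)^3 + (-1/4) * (a:ℝ)^2 + (-1/4) * (a:ℝ)^1) • K32 +
            ((1/6) * (a:ℝ)^3 + (1/2) * (a:ℝ)^1) • K33 +
            ((1/6) * (a:ℝ)^2 + (1/2)) • K34 +
            ((1/6) * (a:ℝ)^2 + (1/2)) • K35 +
            ((-1/6) * (a:ℝ)^2 + (-1/2)) • K36 +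
            ((-1/6) * (a:ℝ)^2 + (-1/2)) • K37 +
            ((1/6) * (a:ℝ)^4 + (1/2) * (a:ℝ)^2) • K38 +
            ((-1/6) * (a:ℝ)^3 + (-1/2) * (a:ℝ)^1) • K39 +
            ((1/6) * (a:ℝ)^3 + (1/2) * (a:ℝ)^1) • K40 +
            ((-1/12) * (a:ℝ)^4 + (-1/12) * (a:ℝ)^3 + (-1/4) * (a:ℝ)^2 + (-1/4) * (a:ℝ)^1) • K41 +
            ((1/12) * (a:ℝ)^4 + (1/12) * (a:ℝ)^3 + (1/4) * (a:ℝ)^2 + (1/4) * (a:ℝ)^1) • K42 +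
            ((1/6) * (a:ℝ)^3 + (1/2) * (a:ℝ)^1) • K43 +
            ((-1/6) * (a:ℝ)^3 + (-1/2) * (a:ℝ)^1) • K44 +
            ((1/6) * (a:ℝ)^6 + (1/3) * (a:ℝ)^4 + (2) * (a:ℝ)^3 + (-1/2) * (a:ℝ)^2 + (-2) * (a:ℝ)^1) • K45
      have main1b := cancel _ (pow_ne_zero 2 hbsq) _ _ main1
      rw [one_smul] at main1b
      exact main1b
    have hsap1 : ∀ w : U, Q (((a:ℝ)+1) • w) = ((a:ℝ)+1) ^ 2 • Q w := by
      intro w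
      have t := hR w w
      rw [show (a:ℝ) • w + w = ((a:ℝ)+1) • w by module,
          show w + (a:ℝ) • w = ((a:ℝ)+1) • w by module,
          sub_self w, hQ0, show w + w = (2:ℝ) • w by module, htwo w] at t
      linear_combination (norm := module) ((1:ℝ)/2) • t
    have hsam1 : ∀ w : U, Q (((a:ℝ)-1) • w) = ((a:ℝ)-1) ^ 2 • Q w := by
      intro w
      have t := hR w (-w)
      rw [show (a:ℝ) • w + -w = ((a:ℝ)-1) • w by module,
          show w + (a:ℝ) • -w = -(((a:ℝ)-1) • w) by module, heven (((a:ℝ)-1) • w),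
          show w - -w = (2:ℝ) • w by module, htwo w,
          show w + -w = (0:U) by module, hQ0, heven w] at t
      linear_combination (norm := module) ((1:ℝ)/2) • t
    have key : ∀ p q r s : ℝ,
        Q (((a:ℝ)*p+r) • x + ((a:ℝ)*q+s) • y) + Q ((p+(a:ℝ)*r) • x + (q+(a:ℝ)*s) • y)
          + ((a:ℝ) - 1) • Q ((p-r) • x + (q-s) • y)
        = ((a:ℝ) + 1) • Q ((p+r) • x + (q+s) • y)
          + ((a:ℝ) ^ 2 - 1) • (Q (p • x + q • y) + Q (r • x + s • y)) := by
      intro p q r s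
      have t := hR (p • x + q • y) (r • x + s • y)
      rw [show (a:ℝ) • (p • x + q • y) + (r • x + s • y) = ((a:ℝ)*p+r) • x + ((a:ℝ)*q+s) • y by module,
          show (p • x + q • y) + (a:ℝ) • (r • x + s • y) = (p+(a:ℝ)*r) • x + (q+(a:ℝ)*s) • y by module,
          show (p • x + q • y) - (r • x + s • y) = (p-r) • x + (q-s) • y by module,
          show (p • x + q • y) + (r • x + s • y) = (p+r) • x + (q+s) • y by module] at t
      exact t
    have evenC : ∀ p q : ℝ, Q ((-p) • x + (-q) • y) = Q (p • x + q • y) := by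
      intro p q
      rw [show (-p) • x + (-q) • y = -(p • x + q • y) by module]
      exact heven _
    have saC : ∀ p q : ℝ, Q (((a:ℝ)*p) • x + ((a:ℝ)*q) • y) = (a:ℝ) ^ 2 • Q (p • x + q • y) := by
      intro p q
      rw [show ((a:ℝ)*p) • x + ((a:ℝ)*q) • y = (a:ℝ) • (p • x + q • y) by module]
      exact hsa _
    have twoC : ∀ p q : ℝ, Q ((2*p) • x + (2*q) • y) = (4:ℝ) • Q (p • x + q • y) := by
      intro p q
      rw [show (2*p) • x + (2*q) • y = (2:ℝ) • (p • x + q • y) by module]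
      exact htwo _
    have sap1C : ∀ p q : ℝ, Q ((((a:ℝ)+1)*p) • x + (((a:ℝ)+1)*q) • y)
        = ((a:ℝ)+1) ^ 2 • Q (p • x + q • y) := by
      intro p q
      rw [show (((a:ℝ)+1)*p) • x + (((a:ℝ)+1)*q) • y = ((a:ℝ)+1) • (p • x + q • y) by module]
      exact hsap1 _
    have sam1C : ∀ p q : ℝ, Q ((((a:ℝ)-1)*p) • x + (((a:ℝ)-1)*q) • y)
        = ((a:ℝ)-1) ^ 2 • Q (p • x + q • y) := by
      intro p q
      rw [show (((a:ℝ)-1)*p) • x + (((a:ℝ)-1)*q) • y = ((a:ℝ)-1) • (p • x + q • y) by module]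
      exact hsam1 _
    have zeroC : Q ((0:ℝ) • x + (0:ℝ) • y) = 0 := by
      rw [show (0:ℝ) • x + (0:ℝ) • y = (0:U) by module]
      exact hQ0
    have main : (((a:ℝ) ^ 2 - 1) ^ 3) • (Q (((1 : ℝ)) • x + ((1 : ℝ)) • y) + Q (((1 : ℝ)) • x + ((-1 : ℝ)) • y)) = (((a:ℝ) ^ 2 - 1) ^ 3) • ((2:ℝ) • Q (((1 : ℝ)) • x + ((0 : ℝ)) • y) + (2:ℝ) • Q (((0 : ℝ)) • x + ((1 : ℝ)) • y)) := by
      have H1 := evenC ((-1 : ℝ)) ((-1 : ℝ))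
      have H2 := evenC ((-1 : ℝ)) ((1 : ℝ))
      have H3 := evenC ((-1 : ℝ)) ((0 : ℝ))
      have H4 := twoC ((-1 : ℝ)) ((0 : ℝ))
      have H5 := evenC ((-1) * (a:ℝ)^1 + (-1)) ((-1) * (a:ℝ)^1 + (-1))
      have H6 := sap1C ((1 : ℝ)) ((1) * (a:ℝ)^1)
      have H7 := evenC ((-1 : ℝ)) ((-1) * (a:ℝ)^1 + (-1))
      have H8 := sap1C ((-1 : ℝ)) ((-1 : ℝ))
      have H9 := evenC ((-1 : ℝ)) ((-1) * (a:ℝ)^1)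
      have H10 := key ((0 : ℝ)) ((1) * (a:ℝ)^1) ((1) * (a:ℝ)^1) ((-1 : ℝ))
      have H11 := evenC ((-1) * (a:ℝ)^1) ((-1) * (a:ℝ)^1 + (1))
      have H12 := evenC ((-1) * (a:ℝ)^1) ((-1) * (a:ℝ)^2 + (1))
      have H13 := evenC ((-1) * (a:ℝ)^1) ((1 : ℝ))
      have H14 := evenC ((-1) * (a:ℝ)^2) ((0 : ℝ))
      have H15 := saC ((-1) * (a:ℝ)^1) ((0 : ℝ))
      have H16 := saC ((-1 : ℝ)) ((0 : ℝ))
      have H17 := key ((0 : ℝ)) ((1 : ℝ)) ((-1 : ℝ)) ((-1) * (a:ℝ)^1)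
      have H18 := key ((0 : ℝ)) ((1 : ℝ)) ((-1 : ℝ)) ((-1 : ℝ))
      have H19 := key ((0 : ℝ)) ((1 : ℝ)) ((-1 : ℝ)) ((0 : ℝ))
      have H20 := evenC ((-1 : ℝ)) ((1) * (a:ℝ)^1 + (-1))
      have H21 := evenC ((-1 : ℝ)) ((-1) * (a:ℝ)^1 + (1))
      have H22 := evenC ((-1 : ℝ)) ((1) * (a:ℝ)^1 + (1))
      have H23 := key ((1 : ℝ)) ((0 : ℝ)) ((-1 : ℝ)) ((-1) * (a:ℝ)^1 + (1))
      have H24 := sam1C ((-1 : ℝ)) ((-1) * (a:ℝ)^1)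
      have H25 := evenC ((1) * (a:ℝ)^1 + (-1)) ((-1) * (a:ℝ)^1 + (1))
      have H26 := sam1C ((-1 : ℝ)) ((1 : ℝ))
      have H27 := sap1C ((-1 : ℝ)) ((1 : ℝ))
      have H28 := sap1C ((-1 : ℝ)) ((1) * (a:ℝ)^1)
      have H29 := key ((1 : ℝ)) ((0 : ℝ)) ((-1 : ℝ)) ((1) * (a:ℝ)^1 + (-1))
      have H30 := sam1C ((-1 : ℝ)) ((1) * (a:ℝ)^1)
      have H31 := evenC ((1) * (a:ℝ)^1 + (-1)) ((1) * (a:ℝ)^1 + (-1))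
      have H32 := sam1C ((-1 : ℝ)) ((-1 : ℝ))
      have H33 := key ((0 : ℝ)) ((1) * (a:ℝ)^1) ((-1 : ℝ)) ((1) * (a:ℝ)^1)
      have H34 := saC ((-1 : ℝ)) ((1) * (a:ℝ)^1 + (1))
      have H35 := key ((0 : ℝ)) ((1) * (a:ℝ)^1) ((1 : ℝ)) ((-1) * (a:ℝ)^1)
      have H36 := evenC ((-1 : ℝ)) ((1) * (a:ℝ)^1)
      have H37 := evenC ((-1) * (a:ℝ)^1) ((1) * (a:ℝ)^2 + (-1) * (a:ℝ)^1)
      have H38 := saC ((-1 : ℝ)) ((1) * (a:ℝ)^1 + (-1))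
      have H39 := key ((1 : ℝ)) ((0 : ℝ)) ((0 : ℝ)) ((-1) * (a:ℝ)^1 + (-1))
      have H40 := evenC ((-1 : ℝ)) ((1) * (a:ℝ)^2 + (1) * (a:ℝ)^1)
      have H41 := evenC ((-1) * (a:ℝ)^1) ((1) * (a:ℝ)^1 + (1))
      have H42 := key ((1 : ℝ)) ((0 : ℝ)) ((0 : ℝ)) ((1) * (a:ℝ)^1 + (-1))
      have H43 := key ((0 : ℝ)) ((1) * (a:ℝ)^1) ((-1 : ℝ)) ((-1) * (a:ℝ)^1)
      have H44 := saC ((-1 : ℝ)) ((-1) * (a:ℝ)^1 + (1))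
      have H45 := key ((1 : ℝ)) ((0 : ℝ)) ((0 : ℝ)) ((-1) * (a:ℝ)^1 + (1))
      have H46 := evenC ((-1 : ℝ)) ((1) * (a:ℝ)^2 + (-1) * (a:ℝ)^1)
      have H47 := key ((0 : ℝ)) ((1 : ℝ)) ((1 : ℝ)) ((-1 : ℝ))
      have H48 := key ((0 : ℝ)) ((1 : ℝ)) ((-1 : ℝ)) ((1 : ℝ))
      have H49 := key ((0 : ℝ)) ((1) * (a:ℝ)^1) ((1 : ℝ)) ((1) * (a:ℝ)^1)
      have H50 := evenC ((-1) * (a:ℝ)^1) ((-1) * (a:ℝ)^2 + (-1) * (a:ℝ)^1)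
      have H51 := saC ((-1 : ℝ)) ((-1) * (a:ℝ)^1 + (-1))
      have H52 := key ((1 : ℝ)) ((0 : ℝ)) ((0 : ℝ)) ((1) * (a:ℝ)^1 + (1))
      have H53 := key ((0 : ℝ)) ((1 : ℝ)) ((1 : ℝ)) ((1 : ℝ))
      have H54 := sap1C ((-1 : ℝ)) ((0 : ℝ))
      have H55 := key ((0 : ℝ)) ((1 : ℝ)) ((1) * (a:ℝ)^1 + (1)) ((-1) * (a:ℝ)^1)
      have H56 := evenC ((-1) * (a:ℝ)^1 + (-1)) ((0 : ℝ))
      have H57 := evenC ((-1) * (a:ℝ)^2 + (-1) * (a:ℝ)^1) ((1) * (a:ℝ)^2 + (-1))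
      have H58 := sap1C ((-1) * (a:ℝ)^1) ((1) * (a:ℝ)^1 + (-1))
      have H59 := evenC ((-1) * (a:ℝ)^1) ((1) * (a:ℝ)^1 + (-1))
      have H60 := key ((1 : ℝ)) ((1 : ℝ)) ((1 : ℝ)) ((-1 : ℝ))
      have H61 := evenC ((-2 : ℝ)) ((0 : ℝ))
      have H62 := key ((1 : ℝ)) ((0 : ℝ)) ((1 : ℝ)) ((1 : ℝ))
      have H63 := key ((0 : ℝ)) ((1) * (a:ℝ)^1) ((1) * (a:ℝ)^1 + (1)) ((0 : ℝ))
      have H64 := evenC ((-1) * (a:ℝ)^2 + (-1) * (a:ℝ)^1) ((-1) * (a:ℝ)^1)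
      have H65 := saC ((-1) * (a:ℝ)^1 + (-1)) ((-1 : ℝ))
      have H66 := key ((1 : ℝ)) ((0 : ℝ)) ((1 : ℝ)) ((1) * (a:ℝ)^1)
      have H67 := evenC ((-1) * (a:ℝ)^1 + (-1)) ((1) * (a:ℝ)^1)
      have H68 := evenC ((-1) * (a:ℝ)^1 + (-1)) ((-1 : ℝ))
      have H69 := evenC ((-1) * (a:ℝ)^1 + (-1)) ((1 : ℝ))
      have H70 := evenC ((-1) * (a:ℝ)^1 + (-1)) ((-1) * (a:ℝ)^1 + (1))
      have H71 := key ((0 : ℝ)) ((1 : ℝ)) ((-1) * (a:ℝ)^1 + (-1)) ((-1) * (a:ℝ)^1)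
      have H72 := sap1C ((-1) * (a:ℝ)^1) ((-1) * (a:ℝ)^1 + (1))
      have H73 := evenC ((-1) * (a:ℝ)^1 + (-1)) ((-1) * (a:ℝ)^1)
      have H74 := key ((0 : ℝ)) ((1) * (a:ℝ)^1) ((1) * (a:ℝ)^1 + (1)) ((-1) * (a:ℝ)^1)
      have H75 := evenC ((-1) * (a:ℝ)^2 + (-1) * (a:ℝ)^1) ((1) * (a:ℝ)^2 + (-1) * (a:ℝ)^1)
      have H76 := saC ((-1) * (a:ℝ)^1 + (-1)) ((1) * (a:ℝ)^1 + (-1))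
      have H77 := key ((1 : ℝ)) ((0 : ℝ)) ((1 : ℝ)) ((1) * (a:ℝ)^1 + (-1))
      have H78 := evenC ((-1) * (a:ℝ)^1 + (-1)) ((1) * (a:ℝ)^1 + (-1))
      have H79 := key ((0 : ℝ)) ((1) * (a:ℝ)^1) ((1) * (a:ℝ)^1 + (1)) ((1) * (a:ℝ)^1)
      have H80 := evenC ((-1) * (a:ℝ)^2 + (-1) * (a:ℝ)^1) ((-1) * (a:ℝ)^2 + (-1) * (a:ℝ)^1)
      have H81 := saC ((-1) * (a:ℝ)^1 + (-1)) ((-1) * (a:ℝ)^1 + (-1))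
      have H82 := key ((0 : ℝ)) ((1) * (a:ℝ)^1) ((-1) * (a:ℝ)^1 + (-1)) ((1) * (a:ℝ)^1)
      have H83 := saC ((-1) * (a:ℝ)^1 + (-1)) ((1) * (a:ℝ)^1 + (1))
      have H84 := key ((0 : ℝ)) ((1) * (a:ℝ)^1) ((-1) * (a:ℝ)^1 + (-1)) ((-1) * (a:ℝ)^1)
      have H85 := saC ((-1) * (a:ℝ)^1 + (-1)) ((-1) * (a:ℝ)^1 + (1))
      have H86 := key ((1 : ℝ)) ((0 : ℝ)) ((1 : ℝ)) ((-1) * (a:ℝ)^1 + (1))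
      have H87 := evenC ((-1) * (a:ℝ)^1 + (-1)) ((1) * (a:ℝ)^2 + (-1) * (a:ℝ)^1)
      have H88 := key ((0 : ℝ)) ((1) * (a:ℝ)^1) ((-1) * (a:ℝ)^1 + (1)) ((0 : ℝ))
      have H89 := sam1C ((-1 : ℝ)) ((0 : ℝ))
      have H90 := evenC ((1) * (a:ℝ)^2 + (-1) * (a:ℝ)^1) ((-1) * (a:ℝ)^1)
      have H91 := saC ((1) * (a:ℝ)^1 + (-1)) ((-1 : ℝ))
      have H92 := key ((1 : ℝ)) ((0 : ℝ)) ((-1 : ℝ)) ((1) * (a:ℝ)^1)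
      have H93 := key ((1 : ℝ)) ((0 : ℝ)) ((-1 : ℝ)) ((-1 : ℝ))
      have H94 := evenC ((1) * (a:ℝ)^1 + (-1)) ((1) * (a:ℝ)^1)
      have H95 := key ((1 : ℝ)) ((1 : ℝ)) ((-1 : ℝ)) ((1 : ℝ))
      have H96 := key ((0 : ℝ)) ((1 : ℝ)) ((-1) * (a:ℝ)^1 + (1)) ((-1) * (a:ℝ)^1)
      have H97 := sam1C ((-1) * (a:ℝ)^1) ((-1) * (a:ℝ)^1 + (-1))
      have H98 := evenC ((-1) * (a:ℝ)^1) ((-1) * (a:ℝ)^1 + (-1))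
      have H99 := key ((0 : ℝ)) ((1 : ℝ)) ((1) * (a:ℝ)^1 + (-1)) ((-1) * (a:ℝ)^1)
      have H100 := evenC ((1) * (a:ℝ)^2 + (-1) * (a:ℝ)^1) ((-1) * (a:ℝ)^2 + (1))
      have H101 := sam1C ((-1) * (a:ℝ)^1) ((1) * (a:ℝ)^1 + (1))
      have H102 := evenC ((1) * (a:ℝ)^1 + (-1)) ((0 : ℝ))
      have H103 := evenC ((1) * (a:ℝ)^1 + (-1)) ((-1) * (a:ℝ)^1)
      have H104 := key ((1 : ℝ)) ((0 : ℝ)) ((-1 : ℝ)) ((1 : ℝ))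
      have H105 := key ((0 : ℝ)) ((1) * (a:ℝ)^1) ((1) * (a:ℝ)^1 + (-1)) ((0 : ℝ))
      have H106 := saC ((1) * (a:ℝ)^1 + (-1)) ((1 : ℝ))
      have H107 := key ((1 : ℝ)) ((0 : ℝ)) ((-1 : ℝ)) ((-1) * (a:ℝ)^1)
      have H108 := evenC ((1) * (a:ℝ)^1 + (-1)) ((1) * (a:ℝ)^2)
      have H109 := key ((1 : ℝ)) ((0 : ℝ)) ((1 : ℝ)) ((-1 : ℝ))
      have H110 := key ((0 : ℝ)) ((1) * (a:ℝ)^1) ((-1) * (a:ℝ)^1 + (-1)) ((0 : ℝ))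
      have H111 := saC ((-1) * (a:ℝ)^1 + (-1)) ((1 : ℝ))
      have H112 := key ((1 : ℝ)) ((0 : ℝ)) ((1 : ℝ)) ((-1) * (a:ℝ)^1)
      have H113 := evenC ((-1) * (a:ℝ)^1 + (-1)) ((1) * (a:ℝ)^2)
      have H114 := evenC ((0 : ℝ)) ((-2 : ℝ))
      have H115 := evenC ((0 : ℝ)) ((-1) * (a:ℝ)^1 + (-1))
      have H116 := sam1C ((0 : ℝ)) ((-1 : ℝ))
      have H117 := evenC ((0 : ℝ)) ((-1 : ℝ))
      have H118 := evenC ((0 : ℝ)) ((-1) * (a:ℝ)^1)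
      have H119 := saC ((0 : ℝ)) ((-1 : ℝ))
      have H120 := evenC ((0 : ℝ)) ((1) * (a:ℝ)^1 + (-1))
      have H121 := sap1C ((0 : ℝ)) ((-1 : ℝ))
      have H122 := twoC ((0 : ℝ)) ((-1 : ℝ))
      ring_nf at H1 H2 H3 H4 H5 H6 H7 H8 H9 H10 H11 H12 H13 H14 H15 H16 H17 H18 H19 H20 H21 H22 H23 H24 H25 H26 H27 H28 H29 H30 H31 H32 H33 H34 H35 H36 H37 H38 H39 H40 H41 H42 H43 H44 H45 H46 H47 H48 H49 H50 H51 H52 H53 H54 H55 H56 H57 H58 H59 H60 H61 H62 H63 H64 H65 H66 H67 H68 H69 H70 H71 H72 H73 H74 H75 H76 H77 H78 H79 H80 H81 H82 H83 H84 H85 H86 H87 H88 H89 H90 H91 H92 H93 H94 H95 H96 H97 H98 H99 H100 H101 H102 H103 H104 H105 H106 H107 H108 H109 H110 H111 H112 H113 H114 H115 H116 H117 H118 H119 H120 H121 H122 ⊢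
      linear_combination (norm := module)
          ((1/6) * (a:ℝ)^8 + (-1/2) * (a:ℝ)^7 + (1/2) * (a:ℝ)^6 + (1/6) * (a:ℝ)^5 + (-5/2) * (a:ℝ)^4 + (7/6) * (a:ℝ)^3 + (17/6) * (a:ℝ)^2 + (-5/6) * (a:ℝ)^1 + (-1)) • H1 +
          ((1/4) * (a:ℝ)^8 + (2/3) * (a:ℝ)^6 + (1/3) * (a:ℝ)^5 + (-17/6) * (a:ℝ)^4 + (-2/3) * (a:ℝ)^3 + (8/3) * (a:ℝ)^2 + (1/3) * (a:ℝ)^1 + (-3/4)) • H2 +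
          ((-1/3) * (a:ℝ)^9 + (2/3) * (a:ℝ)^8 + (-2) * (a:ℝ)^6 + (2) * (a:ℝ)^5 + (8/3) * (a:ℝ)^4 + (-8/3) * (a:ℝ)^3 + (-10/3) * (a:ℝ)^2 + (1) * (a:ℝ)^1 + (2)) • H3 +
          ((-1/3) * (a:ℝ)^7 + (-1/6) * (a:ℝ)^6 + (-4/3) * (a:ℝ)^5 + (-1/6) * (a:ℝ)^4 + (-1/3) * (a:ℝ)^3 + (5/6) * (a:ℝ)^2 + (2) * (a:ℝ)^1 + (-1/2)) • H4 +
          ((1/12) * (a:ℝ)^6 + (1/4) * (a:ℝ)^4 + (-1/3) * (a:ℝ)^3 + (1/4) * (a:ℝ)^2 + (-1) * (a:ℝ)^1 + (3/4)) • H5 +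
          ((-1/6) * (a:ℝ)^4 + (1/3) * (a:ℝ)^3 + (-2/3) * (a:ℝ)^2 + (1) * (a:ℝ)^1 + (-1/2)) • H6 +
          ((-1/12) * (a:ℝ)^7 + (-1/12) * (a:ℝ)^6 + (1/3) * (a:ℝ)^4 + (1/12) * (a:ℝ)^3 + (-1/4) * (a:ℝ)^2) • H7 +
          ((-1/12) * (a:ℝ)^6 + (1/3) * (a:ℝ)^5 + (-5/12) * (a:ℝ)^4 + (2/3) * (a:ℝ)^3 + (-1/4) * (a:ℝ)^2 + (-1) * (a:ℝ)^1 + (3/4)) • H8 +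
          ((-1/6) * (a:ℝ)^7 + (-1/6) * (a:ℝ)^5 + (5/6) * (a:ℝ)^3 + (-1/2) * (a:ℝ)^1) • H9 +
          ((-1/3) * (a:ℝ)^5 + (-2/3) * (a:ℝ)^3 + (1) * (a:ℝ)^1) • H10 +
          ((-1/3) * (a:ℝ)^6 + (-5/12) * (a:ℝ)^5 + (-11/12) * (a:ℝ)^4 + (-1) * (a:ℝ)^3 + (1) * (a:ℝ)^2 + (17/12) * (a:ℝ)^1 + (1/4)) • H11 +
          ((1/3) * (a:ℝ)^5 + (2/3) * (a:ℝ)^3 + (-1) * (a:ℝ)^1) • H12 +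
          ((-1/3) * (a:ℝ)^7 + (-1/3) * (a:ℝ)^5 + (5/3) * (a:ℝ)^3 + (-1) * (a:ℝ)^1) • H13 +
          ((1/3) * (a:ℝ)^5 + (2/3) * (a:ℝ)^3 + (-1) * (a:ℝ)^1) • H14 +
          ((1/3) * (a:ℝ)^5 + (2/3) * (a:ℝ)^3 + (-1) * (a:ℝ)^1) • H15 +
          ((1/3) * (a:ℝ)^7 + (2/3) * (a:ℝ)^5 + (-1) * (a:ℝ)^3) • H16 +
          ((1/3) * (a:ℝ)^5 + (2/3) * (a:ℝ)^3 + (-1) * (a:ℝ)^1) • H17 +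
          ((1/12) * (a:ℝ)^7 + (-1/12) * (a:ℝ)^6 + (1/6) * (a:ℝ)^5 + (-1/6) * (a:ℝ)^4 + (-5/12) * (a:ℝ)^3 + (3/4) * (a:ℝ)^2 + (1/6) * (a:ℝ)^1 + (-1/2)) • H18 +
          ((-1/3) * (a:ℝ)^7 + (-1/3) * (a:ℝ)^5 + (5/3) * (a:ℝ)^3 + (-1) * (a:ℝ)^1) • H19 +
          ((-1/6) * (a:ℝ)^6 + (1/6) * (a:ℝ)^5 + (1/3) * (a:ℝ)^4 + (2/3) * (a:ℝ)^3 + (5/6) * (a:ℝ)^2 + (-5/6) * (a:ℝ)^1 + (-1)) • H20 +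
          ((-1/12) * (a:ℝ)^7 + (-5/12) * (a:ℝ)^6 + (-1/3) * (a:ℝ)^5 + (-1/6) * (a:ℝ)^4 + (5/12) * (a:ℝ)^3 + (13/12) * (a:ℝ)^2 + (-1/2)) • H21 +
          ((1/6) * (a:ℝ)^5 + (1/6) * (a:ℝ)^4 + (-2/3) * (a:ℝ)^2 + (-1/6) * (a:ℝ)^1 + (1/2)) • H22 +
          ((-1/6) * (a:ℝ)^4 + (-1/3) * (a:ℝ)^3 + (-2/3) * (a:ℝ)^2 + (-1) * (a:ℝ)^1 + (-1/2)) • H23 +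
          ((1/6) * (a:ℝ)^4 + (1/3) * (a:ℝ)^3 + (2/3) * (a:ℝ)^2 + (1) * (a:ℝ)^1 + (1/2)) • H24 +
          ((1/12) * (a:ℝ)^6 + (1/12) * (a:ℝ)^4 + (-5/12) * (a:ℝ)^2 + (1/4)) • H25 +
          ((-1/12) * (a:ℝ)^6 + (-1/12) * (a:ℝ)^4 + (5/12) * (a:ℝ)^2 + (-1/4)) • H26 +
          ((-1/12) * (a:ℝ)^6 + (1/3) * (a:ℝ)^5 + (-5/12) * (a:ℝ)^4 + (2/3) * (a:ℝ)^3 + (-1/4) * (a:ℝ)^2 + (-1) * (a:ℝ)^1 + (3/4)) • H27 +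
          ((-1/6) * (a:ℝ)^4 + (1/3) * (a:ℝ)^3 + (-2/3) * (a:ℝ)^2 + (1) * (a:ℝ)^1 + (-1/2)) • H28 +
          ((-1/6) * (a:ℝ)^4 + (-1/3) * (a:ℝ)^3 + (-2/3) * (a:ℝ)^2 + (-1) * (a:ℝ)^1 + (-1/2)) • H29 +
          ((1/6) * (a:ℝ)^4 + (1/3) * (a:ℝ)^3 + (2/3) * (a:ℝ)^2 + (1) * (a:ℝ)^1 + (1/2)) • H30 +
          ((-1/6) * (a:ℝ)^4 + (-1/3) * (a:ℝ)^3 + (-2/3) * (a:ℝ)^2 + (-1) * (a:ℝ)^1 + (-1/2)) • H31 +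
          ((-1/12) * (a:ℝ)^6 + (-1/12) * (a:ℝ)^4 + (5/12) * (a:ℝ)^2 + (-1/4)) • H32 +
          ((-1/12) * (a:ℝ)^5 + (-1/12) * (a:ℝ)^4 + (1/3) * (a:ℝ)^2 + (1/12) * (a:ℝ)^1 + (-1/4)) • H33 +
          ((1/12) * (a:ℝ)^5 + (1/12) * (a:ℝ)^4 + (-1/3) * (a:ℝ)^2 + (-1/12) * (a:ℝ)^1 + (1/4)) • H34 +
          ((-1/12) * (a:ℝ)^5 + (-1/4) * (a:ℝ)^4 + (-1/3) * (a:ℝ)^3 + (5/12) * (a:ℝ)^1 + (1/4)) • H35 +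
          ((-1/6) * (a:ℝ)^7 + (-1/2) * (a:ℝ)^5 + (3/2) * (a:ℝ)^3 + (-5/6) * (a:ℝ)^1) • H36 +
          ((1/12) * (a:ℝ)^5 + (1/4) * (a:ℝ)^4 + (1/3) * (a:ℝ)^3 + (-5/12) * (a:ℝ)^1 + (-1/4)) • H37 +
          ((1/12) * (a:ℝ)^5 + (1/4) * (a:ℝ)^4 + (1/3) * (a:ℝ)^3 + (-5/12) * (a:ℝ)^1 + (-1/4)) • H38 +
          ((1/12) * (a:ℝ)^5 + (1/12) * (a:ℝ)^4 + (-1/3) * (a:ℝ)^2 + (-1/12) * (a:ℝ)^1 + (1/4)) • H39 +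
          ((-1/12) * (a:ℝ)^5 + (-1/12) * (a:ℝ)^4 + (1/3) * (a:ℝ)^2 + (1/12) * (a:ℝ)^1 + (-1/4)) • H40 +
          ((-1/12) * (a:ℝ)^5 + (-1/12) * (a:ℝ)^4 + (1/3) * (a:ℝ)^2 + (1/12) * (a:ℝ)^1 + (-1/4)) • H41 +
          ((1/12) * (a:ℝ)^5 + (1/4) * (a:ℝ)^4 + (1/3) * (a:ℝ)^3 + (-5/12) * (a:ℝ)^1 + (-1/4)) • H42 +
          ((-1/12) * (a:ℝ)^5 + (-1/4) * (a:ℝ)^4 + (-1/3) * (a:ℝ)^3 + (5/12) * (a:ℝ)^1 + (1/4)) • H43 +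
          ((1/12) * (a:ℝ)^5 + (1/4) * (a:ℝ)^4 + (1/3) * (a:ℝ)^3 + (-5/12) * (a:ℝ)^1 + (-1/4)) • H44 +
          ((1/12) * (a:ℝ)^5 + (1/4) * (a:ℝ)^4 + (1/3) * (a:ℝ)^3 + (-5/12) * (a:ℝ)^1 + (-1/4)) • H45 +
          ((-1/12) * (a:ℝ)^5 + (-1/4) * (a:ℝ)^4 + (-1/3) * (a:ℝ)^3 + (5/12) * (a:ℝ)^1 + (1/4)) • H46 +
          ((1/12) * (a:ℝ)^7 + (1/4) * (a:ℝ)^6 + (1/2) * (a:ℝ)^5 + (1/2) * (a:ℝ)^4 + (1/4) * (a:ℝ)^3 + (-1/4) * (a:ℝ)^2 + (-5/6) * (a:ℝ)^1 + (-1/2)) • H47 +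
          ((1/12) * (a:ℝ)^7 + (1/12) * (a:ℝ)^6 + (1/6) * (a:ℝ)^5 + (-1/6) * (a:ℝ)^4 + (-1/12) * (a:ℝ)^3 + (-5/12) * (a:ℝ)^2 + (-1/6) * (a:ℝ)^1 + (1/2)) • H48 +
          ((-1/12) * (a:ℝ)^5 + (-1/12) * (a:ℝ)^4 + (1/3) * (a:ℝ)^2 + (1/12) * (a:ℝ)^1 + (-1/4)) • H49 +
          ((1/12) * (a:ℝ)^5 + (1/12) * (a:ℝ)^4 + (-1/3) * (a:ℝ)^2 + (-1/12) * (a:ℝ)^1 + (1/4)) • H50 +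
          ((1/12) * (a:ℝ)^5 + (1/12) * (a:ℝ)^4 + (-1/3) * (a:ℝ)^2 + (-1/12) * (a:ℝ)^1 + (1/4)) • H51 +
          ((1/12) * (a:ℝ)^5 + (1/12) * (a:ℝ)^4 + (-1/3) * (a:ℝ)^2 + (-1/12) * (a:ℝ)^1 + (1/4)) • H52 +
          ((1/12) * (a:ℝ)^7 + (-1/4) * (a:ℝ)^6 + (1/2) * (a:ℝ)^5 + (-5/6) * (a:ℝ)^4 + (7/12) * (a:ℝ)^3 + (7/12) * (a:ℝ)^2 + (-7/6) * (a:ℝ)^1 + (1/2)) • H53 +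
          ((1/6) * (a:ℝ)^7 + (-1/2) * (a:ℝ)^6 + (2/3) * (a:ℝ)^5 + (2) * (a:ℝ)^4 + (-13/6) * (a:ℝ)^3 + (9/2) * (a:ℝ)^2 + (-8/3) * (a:ℝ)^1 + (-2)) • H54 +
          ((-1/12) * (a:ℝ)^5 + (-1/12) * (a:ℝ)^4 + (-1/3) * (a:ℝ)^3 + (-1/4) * (a:ℝ)^1 + (3/4)) • H55 +
          ((1/12) * (a:ℝ)^7 + (-1/4) * (a:ℝ)^6 + (1/3) * (a:ℝ)^5 + (1) * (a:ℝ)^4 + (-13/12) * (a:ℝ)^3 + (9/4) * (a:ℝ)^2 + (-4/3) * (a:ℝ)^1 + (-1)) • H56 +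
          ((1/12) * (a:ℝ)^5 + (1/12) * (a:ℝ)^4 + (1/3) * (a:ℝ)^3 + (1/4) * (a:ℝ)^1 + (-3/4)) • H57 +
          ((1/12) * (a:ℝ)^5 + (1/12) * (a:ℝ)^4 + (1/3) * (a:ℝ)^3 + (1/4) * (a:ℝ)^1 + (-3/4)) • H58 +
          ((-1/12) * (a:ℝ)^7 + (-1/4) * (a:ℝ)^6 + (-7/12) * (a:ℝ)^5 + (-3/4) * (a:ℝ)^4 + (-7/12) * (a:ℝ)^3 + (1/4) * (a:ℝ)^2 + (5/4) * (a:ℝ)^1 + (3/4)) • H59 +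
          ((-1/4) * (a:ℝ)^6 + (-1/6) * (a:ℝ)^5 + (-7/12) * (a:ℝ)^4 + (-1/3) * (a:ℝ)^3 + (7/12) * (a:ℝ)^2 + (1/2) * (a:ℝ)^1 + (1/4)) • H60 +
          ((-1/3) * (a:ℝ)^7 + (-1/6) * (a:ℝ)^6 + (-4/3) * (a:ℝ)^5 + (-1/6) * (a:ℝ)^4 + (-1/3) * (a:ℝ)^3 + (5/6) * (a:ℝ)^2 + (2) * (a:ℝ)^1 + (-1/2)) • H61 +
          ((-1/12) * (a:ℝ)^7 + (1/4) * (a:ℝ)^6 + (-1/3) * (a:ℝ)^5 + (5/12) * (a:ℝ)^3 + (-1/4) * (a:ℝ)^2) • H62 +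
          ((1/12) * (a:ℝ)^5 + (-1/4) * (a:ℝ)^4 + (1/3) * (a:ℝ)^3 + (-5/12) * (a:ℝ)^1 + (1/4)) • H63 +
          ((-1/12) * (a:ℝ)^5 + (1/4) * (a:ℝ)^4 + (-1/3) * (a:ℝ)^3 + (5/12) * (a:ℝ)^1 + (-1/4)) • H64 +
          ((-1/12) * (a:ℝ)^5 + (1/4) * (a:ℝ)^4 + (-1/3) * (a:ℝ)^3 + (5/12) * (a:ℝ)^1 + (-1/4)) • H65 +
          ((-1/12) * (a:ℝ)^5 + (1/4) * (a:ℝ)^4 + (-1/3) * (a:ℝ)^3 + (5/12) * (a:ℝ)^1 + (-1/4)) • H66 +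
          ((-1/6) * (a:ℝ)^6 + (1/6) * (a:ℝ)^5 + (1/6) * (a:ℝ)^2 + (-1/6) * (a:ℝ)^1) • H67 +
          ((1/12) * (a:ℝ)^7 + (-1/4) * (a:ℝ)^6 + (1/3) * (a:ℝ)^5 + (-5/12) * (a:ℝ)^3 + (1/4) * (a:ℝ)^2) • H68 +
          ((1/12) * (a:ℝ)^7 + (-1/4) * (a:ℝ)^6 + (1/3) * (a:ℝ)^5 + (-5/12) * (a:ℝ)^3 + (1/4) * (a:ℝ)^2) • H69 +
          ((1/4) * (a:ℝ)^6 + (1/6) * (a:ℝ)^5 + (3/4) * (a:ℝ)^4 + (1/3) * (a:ℝ)^3 + (-1/4) * (a:ℝ)^2 + (-1/2) * (a:ℝ)^1 + (-3/4)) • H70 +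
          ((-1/12) * (a:ℝ)^5 + (-1/12) * (a:ℝ)^4 + (-1/3) * (a:ℝ)^3 + (-1/4) * (a:ℝ)^1 + (3/4)) • H71 +
          ((1/12) * (a:ℝ)^5 + (1/12) * (a:ℝ)^4 + (1/3) * (a:ℝ)^3 + (1/4) * (a:ℝ)^1 + (-3/4)) • H72 +
          ((1/12) * (a:ℝ)^7 + (-1/12) * (a:ℝ)^6 + (1/4) * (a:ℝ)^5 + (-1/4) * (a:ℝ)^4 + (-1/12) * (a:ℝ)^3 + (1/12) * (a:ℝ)^2 + (-1/4) * (a:ℝ)^1 + (1/4)) • H73 +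
          ((1/6) * (a:ℝ)^4 + (1/3) * (a:ℝ)^2 + (-1/2)) • H74 +
          ((-1/6) * (a:ℝ)^4 + (-1/3) * (a:ℝ)^2 + (1/2)) • H75 +
          ((-1/6) * (a:ℝ)^4 + (-1/3) * (a:ℝ)^2 + (1/2)) • H76 +
          ((-1/6) * (a:ℝ)^4 + (-1/3) * (a:ℝ)^2 + (1/2)) • H77 +
          ((1/6) * (a:ℝ)^6 + (1/3) * (a:ℝ)^4 + (-1/2) * (a:ℝ)^2) • H78 +
          ((1/6) * (a:ℝ)^4 + (-1/3) * (a:ℝ)^3 + (2/3) * (a:ℝ)^2 + (-1) * (a:ℝ)^1 + (1/2)) • H79 +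
          ((-1/6) * (a:ℝ)^4 + (1/3) * (a:ℝ)^3 + (-2/3) * (a:ℝ)^2 + (1) * (a:ℝ)^1 + (-1/2)) • H80 +
          ((-1/6) * (a:ℝ)^4 + (1/3) * (a:ℝ)^3 + (-2/3) * (a:ℝ)^2 + (1) * (a:ℝ)^1 + (-1/2)) • H81 +
          ((1/6) * (a:ℝ)^4 + (-1/3) * (a:ℝ)^3 + (2/3) * (a:ℝ)^2 + (-1) * (a:ℝ)^1 + (1/2)) • H82 +
          ((-1/6) * (a:ℝ)^4 + (1/3) * (a:ℝ)^3 + (-2/3) * (a:ℝ)^2 + (1) * (a:ℝ)^1 + (-1/2)) • H83 +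
          ((1/6) * (a:ℝ)^4 + (1/3) * (a:ℝ)^2 + (-1/2)) • H84 +
          ((-1/6) * (a:ℝ)^4 + (-1/3) * (a:ℝ)^2 + (1/2)) • H85 +
          ((-1/6) * (a:ℝ)^4 + (-1/3) * (a:ℝ)^2 + (1/2)) • H86 +
          ((1/6) * (a:ℝ)^4 + (1/3) * (a:ℝ)^2 + (-1/2)) • H87 +
          ((1/12) * (a:ℝ)^5 + (-1/12) * (a:ℝ)^4 + (1/3) * (a:ℝ)^2 + (-1/12) * (a:ℝ)^1 + (-1/4)) • H88 +
          ((1/6) * (a:ℝ)^7 + (-1/6) * (a:ℝ)^6 + (2/3) * (a:ℝ)^4 + (1/2) * (a:ℝ)^3 + (-7/6) * (a:ℝ)^2 + (2/3) * (a:ℝ)^1 + (2)) • H89 +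
          ((-1/12) * (a:ℝ)^5 + (1/12) * (a:ℝ)^4 + (-1/3) * (a:ℝ)^2 + (1/12) * (a:ℝ)^1 + (1/4)) • H90 +
          ((-1/12) * (a:ℝ)^5 + (1/12) * (a:ℝ)^4 + (-1/3) * (a:ℝ)^2 + (1/12) * (a:ℝ)^1 + (1/4)) • H91 +
          ((-1/12) * (a:ℝ)^5 + (1/12) * (a:ℝ)^4 + (-1/3) * (a:ℝ)^2 + (1/12) * (a:ℝ)^1 + (1/4)) • H92 +
          ((-1/12) * (a:ℝ)^7 + (1/12) * (a:ℝ)^6 + (-1/3) * (a:ℝ)^4 + (1/12) * (a:ℝ)^3 + (1/4) * (a:ℝ)^2) • H93 +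
          ((-1/4) * (a:ℝ)^5 + (1/4) * (a:ℝ)^4 + (-1) * (a:ℝ)^2 + (1/4) * (a:ℝ)^1 + (3/4)) • H94 +
          ((1/12) * (a:ℝ)^6 + (-1/6) * (a:ℝ)^5 + (5/12) * (a:ℝ)^4 + (-1/3) * (a:ℝ)^3 + (1/4) * (a:ℝ)^2 + (1/2) * (a:ℝ)^1 + (-3/4)) • H95 +
          ((-1/12) * (a:ℝ)^5 + (1/12) * (a:ℝ)^4 + (-1/3) * (a:ℝ)^3 + (-1/4) * (a:ℝ)^1 + (-3/4)) • H96 +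
          ((1/12) * (a:ℝ)^5 + (-1/12) * (a:ℝ)^4 + (1/3) * (a:ℝ)^3 + (1/4) * (a:ℝ)^1 + (3/4)) • H97 +
          ((-1/12) * (a:ℝ)^7 + (1/4) * (a:ℝ)^6 + (-7/12) * (a:ℝ)^5 + (3/4) * (a:ℝ)^4 + (-7/12) * (a:ℝ)^3 + (-1/4) * (a:ℝ)^2 + (5/4) * (a:ℝ)^1 + (-3/4)) • H98 +
          ((-1/12) * (a:ℝ)^5 + (1/12) * (a:ℝ)^4 + (-1/3) * (a:ℝ)^3 + (-1/4) * (a:ℝ)^1 + (-3/4)) • H99 +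
          ((-1/12) * (a:ℝ)^5 + (1/12) * (a:ℝ)^4 + (-1/3) * (a:ℝ)^3 + (-1/4) * (a:ℝ)^1 + (-3/4)) • H100 +
          ((1/12) * (a:ℝ)^5 + (-1/12) * (a:ℝ)^4 + (1/3) * (a:ℝ)^3 + (1/4) * (a:ℝ)^1 + (3/4)) • H101 +
          ((-1/12) * (a:ℝ)^7 + (1/12) * (a:ℝ)^6 + (-1/3) * (a:ℝ)^4 + (-1/4) * (a:ℝ)^3 + (7/12) * (a:ℝ)^2 + (-1/3) * (a:ℝ)^1 + (-1)) • H102 +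
          ((1/12) * (a:ℝ)^7 + (-1/12) * (a:ℝ)^6 + (1/6) * (a:ℝ)^5 + (1/6) * (a:ℝ)^4 + (-1/12) * (a:ℝ)^3 + (5/12) * (a:ℝ)^2 + (-1/6) * (a:ℝ)^1 + (-1/2)) • H103 +
          ((-1/12) * (a:ℝ)^7 + (1/12) * (a:ℝ)^6 + (-1/3) * (a:ℝ)^4 + (1/12) * (a:ℝ)^3 + (1/4) * (a:ℝ)^2) • H104 +
          ((1/12) * (a:ℝ)^5 + (-1/12) * (a:ℝ)^4 + (1/3) * (a:ℝ)^2 + (-1/12) * (a:ℝ)^1 + (-1/4)) • H105 +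
          ((-1/12) * (a:ℝ)^5 + (1/12) * (a:ℝ)^4 + (-1/3) * (a:ℝ)^2 + (1/12) * (a:ℝ)^1 + (1/4)) • H106 +
          ((-1/12) * (a:ℝ)^5 + (1/12) * (a:ℝ)^4 + (-1/3) * (a:ℝ)^2 + (1/12) * (a:ℝ)^1 + (1/4)) • H107 +
          ((1/12) * (a:ℝ)^5 + (-1/12) * (a:ℝ)^4 + (1/3) * (a:ℝ)^2 + (-1/12) * (a:ℝ)^1 + (-1/4)) • H108 +
          ((-1/12) * (a:ℝ)^7 + (1/4) * (a:ℝ)^6 + (-1/3) * (a:ℝ)^5 + (5/12) * (a:ℝ)^3 + (-1/4) * (a:ℝ)^2) • H109 +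
          ((1/12) * (a:ℝ)^5 + (-1/4) * (a:ℝ)^4 + (1/3) * (a:ℝ)^3 + (-5/12) * (a:ℝ)^1 + (1/4)) • H110 +
          ((-1/12) * (a:ℝ)^5 + (1/4) * (a:ℝ)^4 + (-1/3) * (a:ℝ)^3 + (5/12) * (a:ℝ)^1 + (-1/4)) • H111 +
          ((-1/12) * (a:ℝ)^5 + (1/4) * (a:ℝ)^4 + (-1/3) * (a:ℝ)^3 + (5/12) * (a:ℝ)^1 + (-1/4)) • H112 +
          ((1/12) * (a:ℝ)^5 + (-1/4) * (a:ℝ)^4 + (1/3) * (a:ℝ)^3 + (-5/12) * (a:ℝ)^1 + (1/4)) • H113 +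
          ((1/3) * (a:ℝ)^7 + (-1/6) * (a:ℝ)^6 + (2/3) * (a:ℝ)^5 + (-1/6) * (a:ℝ)^4 + (-1) * (a:ℝ)^3 + (5/6) * (a:ℝ)^2 + (-1/2)) • H114 +
          ((1/12) * (a:ℝ)^7 + (1/12) * (a:ℝ)^6 + (-1/12) * (a:ℝ)^5 + (-5/12) * (a:ℝ)^4 + (-1/12) * (a:ℝ)^3 + (7/12) * (a:ℝ)^2 + (1/12) * (a:ℝ)^1 + (-1/4)) • H115 +
          ((1/6) * (a:ℝ)^7 + (1/2) * (a:ℝ)^6 + (1/2) * (a:ℝ)^5 + (-11/6) * (a:ℝ)^4 + (-17/6) * (a:ℝ)^3 + (-9/2) * (a:ℝ)^2 + (-19/6) * (a:ℝ)^1 + (1/2)) • H116 +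
          ((2/3) * (a:ℝ)^7 + (-2) * (a:ℝ)^6 + (-1/3) * (a:ℝ)^5 + (20/3) * (a:ℝ)^4 + (-16/3) * (a:ℝ)^3 + (-20/3) * (a:ℝ)^2 + (5) * (a:ℝ)^1 + (2)) • H117 +
          ((-1/3) * (a:ℝ)^7 + (-2/3) * (a:ℝ)^6 + (-4/3) * (a:ℝ)^5 + (14/3) * (a:ℝ)^4 + (-1/3) * (a:ℝ)^3 + (-4) * (a:ℝ)^2 + (2) * (a:ℝ)^1) • H118 +
          ((-1/3) * (a:ℝ)^7 + (-2/3) * (a:ℝ)^6 + (-5/3) * (a:ℝ)^5 + (16/3) * (a:ℝ)^4 + (-1) * (a:ℝ)^3 + (-14/3) * (a:ℝ)^2 + (3) * (a:ℝ)^1) • H119 +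
          ((-1/12) * (a:ℝ)^7 + (-1/4) * (a:ℝ)^6 + (-1/4) * (a:ℝ)^5 + (11/12) * (a:ℝ)^4 + (17/12) * (a:ℝ)^3 + (9/4) * (a:ℝ)^2 + (19/12) * (a:ℝ)^1 + (-1/4)) • H120 +
          ((1/6) * (a:ℝ)^7 + (1/6) * (a:ℝ)^6 + (-1/6) * (a:ℝ)^5 + (-5/6) * (a:ℝ)^4 + (-1/6) * (a:ℝ)^3 + (7/6) * (a:ℝ)^2 + (1/6) * (a:ℝ)^1 + (-1/2)) • H121 +
          ((1/3) * (a:ℝ)^7 + (-1/6) * (a:ℝ)^6 + (2/3) * (a:ℝ)^5 + (-1/6) * (a:ℝ)^4 + (-1) * (a:ℝ)^3 + (5/6) * (a:ℝ)^2 + (-1/2)) • H122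
    have main2 := cancel _ (pow_ne_zero 3 hbsq) _ _ main
    rw [show (((1 : ℝ)) • x + ((1 : ℝ)) • y) = x + y by module, show (((1 : ℝ)) • x + ((-1 : ℝ)) • y) = x - y by module,
        show (((1 : ℝ)) • x + ((0 : ℝ)) • y) = x by module, show (((0 : ℝ)) • x + ((1 : ℝ)) • y) = y by module] at main2
    linear_combination (norm := module) main2
  · intro hq x y
    have hqR : ∀ u v : U, Q (u + v) + Q (u - v) = (2:ℝ) • Q u + (2:ℝ) • Q v := by
      intro u v
      have t := hq u v
      have e1 : (2:ℕ) • Q u = (2:ℝ) • Q u := by module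
      have e2 : (2:ℕ) • Q v = (2:ℝ) • Q v := by module
      rw [e1, e2] at t
      exact t
    have hQ0 : Q (0:U) = 0 := by
      have t := hqR 0 0
      simp only [add_zero, sub_zero] at t
      have h2 : (2:ℝ) • Q (0:U) = (2:ℝ) • (0:V) := by
        rw [smul_zero]
        linear_combination (norm := module) -t
      exact cancel 2 two_ne_zero _ _ h2
    have hev : ∀ z : U, Q (-z) = Q z := by
      intro z
      have t := hqR 0 z
      simp only [zero_add, zero_sub, hQ0, smul_zero] at t
      linear_combination (norm := module) t
    have hadd : ∀ w u v : U, Q (u + v + w) - Q (u + v - w)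
        = (Q (u + w) - Q (u - w)) + (Q (v + w) - Q (v - w)) := by
      intro w u v
      have A1 := hqR (u + w) v
      rw [show u + w + v = u + v + w by module, show u + w - v = u - v + w by module] at A1
      have A2 := hqR (u - w) v
      rw [show u - w + v = u + v - w by module, show u - w - v = u - v - w by module] at A2
      have A3 := hqR (v + w) u
      rw [show v + w + u = u + v + w by module, show v + w - u = -(u - v - w) by module,
          hev (u - v - w)] at A3
      have A4 := hqR (v - w) u
      rw [show v - w + u = u + v - w by module, show v - w - u = -(u - v + w) by module,
          hev (u - v + w)] at A4
      linear_combination (norm := module)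
        ((1:ℝ)/2) • A1 - ((1:ℝ)/2) • A2 + ((1:ℝ)/2) • A3 - ((1:ℝ)/2) • A4
    have hzB : ∀ w z : U, Q ((a:ℝ) • z + w) - Q ((a:ℝ) • z - w)
        = (a:ℝ) • (Q (z + w) - Q (z - w)) := by
      intro w z
      have t := map_zsmul (AddMonoidHom.mk' (fun u => Q (u + w) - Q (u - w))
        (fun u v => hadd w u v)) a z
      simp only [AddMonoidHom.mk'_apply] at t
      rw [← Int.cast_smul_eq_zsmul ℝ a z, ← Int.cast_smul_eq_zsmul ℝ a
        (Q (z + w) - Q (z - w))] at t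
      exact t
    have hq2 : ∀ z : U, Q (z + z) = (4:ℝ) • Q z := by
      intro z
      have t := hqR z z
      rw [sub_self, hQ0] at t
      linear_combination (norm := module) t
    have hQa : ∀ z : U, Q ((a:ℝ) • z) = (a:ℝ) ^ 2 • Q z := by
      intro z
      have t1 := hzB ((a:ℝ) • z) z
      rw [sub_self ((a:ℝ) • z), hQ0, hq2 ((a:ℝ) • z),
          show z + (a:ℝ) • z = (a:ℝ) • z + z by module,
          show z - (a:ℝ) • z = -((a:ℝ) • z - z) by module, hev ((a:ℝ) • z - z)] at t1
      have t2 := hzB z z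
      rw [sub_self z, hQ0, hq2 z] at t2
      have final : (4:ℝ) • Q ((a:ℝ) • z) = (4:ℝ) • ((a:ℝ) ^ 2 • Q z) := by
        linear_combination (norm := module) t1 + (a:ℝ) • t2
      exact cancel 4 (by norm_num) _ _ final
    rw [← Int.cast_smul_eq_zsmul ℝ a x, ← Int.cast_smul_eq_zsmul ℝ a y,
        ← Int.cast_smul_eq_zsmul ℝ (a-1) (Q (x-y)), ← Int.cast_smul_eq_zsmul ℝ (a+1) (Q (x+y)),
        ← Int.cast_smul_eq_zsmul ℝ (a^2-1) (Q x + Q y)]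
    push_cast
    have T1 := hqR ((a:ℝ) • x) y
    have T3 := hzB y x
    have T2 := hqR x ((a:ℝ) • y)
    have T4 := hzB x y
    rw [show (a:ℝ) • y + x = x + (a:ℝ) • y by module,
        show (a:ℝ) • y - x = -(x - (a:ℝ) • y) by module, hev (x - (a:ℝ) • y),
        show y + x = x + y by module, show y - x = -(x - y) by module, hev (x - y)] at T4
    have T5 := hQa x
    have T6 := hQa y
    have T7 := hqR x y
    linear_combination (norm := module)
      ((1:ℝ)/2) • T1 + ((1:ℝ)/2) • T2 + ((1:ℝ)/2) • T3 + ((1:ℝ)/2) • T4 + T5 + T6 - T7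
end

section
/- Let n ≥ 3 be an integer, let U and V be real vector spaces, and suppose Q : U → V satisfies equation (E_n). Then there exists a symmetric biadditive mapping B : U × U → V (B(x,y) = B(y,x), and B is additive in each variable) such that Q(x) = B(x,x) for all x ∈ U. -/
private lemma sum_pairs {M : Type*} [AddCommMonoid M] (n : ℕ) (f : Fin n × Fin n → M) :
    ∑ p ∈ Finset.univ.filter (fun p : Fin n × Fin n => p.1 < p.2), f p
      = ∑ i : Fin n, ∑ j : Fin n, if i < j then f (i, j) else 0 := by
  rw [Finset.sum_filter, ← Finset.univ_product_univ, Finset.sum_product]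

private lemma sum_ite_val {M : Type*} [AddCommMonoid M] (n k : ℕ) (hk : k < n) (c : M) :
    ∑ i : Fin n, (if (i : ℕ) = k then c else 0) = c := by
  have h : ∀ i : Fin n, (if (i : ℕ) = k then c else 0) = if i = ⟨k, hk⟩ then c else 0 := by
    intro i
    refine if_congr ⟨fun h => Fin.ext h, fun h => by rw [h]⟩ rfl rfl
  rw [Finset.sum_congr rfl (fun i _ => h i),
    Finset.sum_ite_eq' Finset.univ (⟨k, hk⟩ : Fin n) (fun _ => c)]
  simp

private lemma sum_ite_val_not {M : Type*} [AddCommGroup M] (n k : ℕ) (hk : k < n) (c : M) :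
    ∑ i : Fin n, (if ¬ (i : ℕ) = k then c else 0) = (n - 1) • c := by
  have h : ∀ i : Fin n, (if ¬ (i : ℕ) = k then c else 0)
      = c - (if (i : ℕ) = k then c else 0) := by
    intro i; by_cases h : (i : ℕ) = k <;> simp [h]
  rw [Finset.sum_congr rfl (fun i _ => h i), Finset.sum_sub_distrib, sum_ite_val n k hk,
    Finset.sum_const, Finset.card_univ, Fintype.card_fin]
  have hn : n = (n - 1) + 1 := by omega
  rw [hn, add_nsmul, one_smul]
  abel

private lemma sum_split {M : Type*} [AddCommMonoid M] (n k : ℕ) (hk : k ≤ n) (G : ℕ → M)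
    (c : M) (hGc : ∀ t, k ≤ t → G t = c) :
    ∑ i : Fin n, G i.val = (∑ t ∈ Finset.range k, G t) + (n - k) • c := by
  rw [Fin.sum_univ_eq_sum_range, Finset.range_eq_Ico,
    ← Finset.sum_Ico_consecutive _ (Nat.zero_le k) hk, ← Finset.range_eq_Ico]
  congr 1
  rw [Finset.sum_congr rfl (fun t ht => hGc t (Finset.mem_Ico.1 ht).1), Finset.sum_const,
    Nat.card_Ico]

private lemma step1 {U V : Type*} [AddCommGroup U] [AddCommGroup V] [Module ℝ V]
    (n : ℕ) (hn : 3 ≤ n) (Q : U → V) (hQ : SatisfiesEn n Q) :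
    Q 0 = 0 ∧ (∀ z : U, Q (-z) = Q z) ∧
      (∀ u v : U, Q (u - v) + Q (u + u + v) + Q (u + v + v)
        = (3:ℝ) • Q u + (3:ℝ) • Q v + (3:ℝ) • Q (u + v)) := by
  have nat_smul : ∀ (k : ℕ) (v : V), k • v = (k:ℝ) • v :=
    fun k v => (Nat.cast_smul_eq_nsmul ℝ k v).symm
  have rcancel : ∀ (r : ℝ), r ≠ 0 → ∀ a b : V, r • a = r • b → a = b :=
    fun r hr a b h => smul_right_injective V hr h
  -- ## Q 0 = 0
  have h0 : Q 0 = 0 := by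
    have h := hQ (fun _ => 0)
    simp only [sub_zero, smul_zero, Finset.sum_const_zero] at h
    rw [Finset.sum_const, Finset.sum_const, Finset.card_univ, Fintype.card_fin, smul_smul] at h
    have hcard : 2 ≤ (Finset.univ.filter (fun p : Fin n × Fin n => p.1 < p.2)).card := by
      refine Finset.one_lt_card.2 ⟨(⟨0, by omega⟩, ⟨1, by omega⟩), ?_,
        (⟨0, by omega⟩, ⟨2, by omega⟩), ?_, ?_⟩
      · exact Finset.mem_filter.2 ⟨Finset.mem_univ _, Fin.mk_lt_mk.2 (by omega)⟩
      · exact Finset.mem_filter.2 ⟨Finset.mem_univ _, Fin.mk_lt_mk.2 (by omega)⟩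
      · intro h
        have := congrArg (fun p : Fin n × Fin n => (p.2 : ℕ)) h
        simp at this
    have hge : 2 * n ≤ n * (Finset.univ.filter (fun p : Fin n × Fin n => p.1 < p.2)).card := by
      calc 2 * n = n * 2 := by ring
      _ ≤ _ := Nat.mul_le_mul_left n hcard
    set K := n * (Finset.univ.filter (fun p : Fin n × Fin n => p.1 < p.2)).card with hK
    have e : K = (K - n) + n := by omega
    rw [e, add_smul] at h
    have h2 : (K - n) • Q 0 = 0 := by
      have := add_eq_right.1 h
      exact this
    rw [nat_smul] at h2
    rcases smul_eq_zero.1 h2 with h3 | h3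
    · exfalso
      have : K - n ≠ 0 := by omega
      exact this (Nat.cast_eq_zero.1 h3)
    · exact h3
  -- ## single-support configs
  have hS2 : ∀ a : U, n • ((n-1) • Q a) = (Q (a - n • a) - Q a) + n • Q a := by
    intro a
    have h := hQ (fun i => if (i:ℕ) = 0 then a else 0)
    rw [sum_pairs] at h
    rw [sum_ite_val n 0 (by omega) a] at h
    have e1 : ∀ i j : Fin n,
        (if i < j then Q ((if (i:ℕ) = 0 then a else 0) - (if (j:ℕ) = 0 then a else 0)) else 0)
          = (if (i:ℕ) = 0 then (if ¬ (j:ℕ) = 0 then Q a else 0) else 0) := by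
      intro i j
      by_cases h2 : (i:ℕ) = 0
      · by_cases h3 : (j:ℕ) = 0
        · have hij : ¬ i < j := by rw [Fin.lt_def]; omega
          simp [hij, h3]
        · have hij : i < j := by rw [Fin.lt_def]; omega
          simp [hij, h2, h3]
      · by_cases h3 : (j:ℕ) = 0
        · have hij : ¬ i < j := by rw [Fin.lt_def]; omega
          simp [hij, h2]
        · by_cases h1 : i < j
          · simp [h1, h2, h3, h0]
          · simp [h1, h2]
    rw [Finset.sum_congr rfl (fun i _ => Finset.sum_congr rfl (fun j _ => e1 i j))] at h
    have e2 : ∀ i : Fin n, (∑ j : Fin n,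
        if (i:ℕ) = 0 then (if ¬ (j:ℕ) = 0 then Q a else 0) else 0)
          = (if (i:ℕ) = 0 then (n-1) • Q a else 0) := by
      intro i
      by_cases h2 : (i:ℕ) = 0
      · simp only [h2, if_true]
        exact sum_ite_val_not n 0 (by omega) (Q a)
      · simp [h2]
    rw [Finset.sum_congr rfl (fun i _ => e2 i), sum_ite_val n 0 (by omega) ((n-1) • Q a)] at h
    have e3 : ∀ i : Fin n, Q (a - n • (if (i:ℕ) = 0 then a else 0))
        = (if (i:ℕ) = 0 then Q (a - n • a) - Q a else 0) + Q a := by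
      intro i; by_cases h2 : (i:ℕ) = 0 <;> simp [h2]
    rw [Finset.sum_congr rfl (fun i _ => e3 i), Finset.sum_add_distrib,
      sum_ite_val n 0 (by omega) _, Finset.sum_const, Finset.card_univ, Fintype.card_fin] at h
    exact h
  have hSl : ∀ a : U, n • ((n-1) • Q (-a)) = (Q (a - n • a) - Q a) + n • Q a := by
    intro a
    have h := hQ (fun i => if (i:ℕ) = n-1 then a else 0)
    rw [sum_pairs] at h
    rw [sum_ite_val n (n-1) (by omega) a] at h
    have e1 : ∀ i j : Fin n,
        (if i < j then Q ((if (i:ℕ) = n-1 then a else 0) - (if (j:ℕ) = n-1 then a else 0)) else 0)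
          = (if ¬ (i:ℕ) = n-1 then (if (j:ℕ) = n-1 then Q (-a) else 0) else 0) := by
      intro i j
      have hj := j.isLt
      have hi := i.isLt
      by_cases h2 : (i:ℕ) = n-1
      · have hij : ¬ i < j := by rw [Fin.lt_def]; omega
        simp [hij, h2]
      · by_cases h3 : (j:ℕ) = n-1
        · have hij : i < j := by rw [Fin.lt_def]; omega
          simp [hij, h2, h3]
        · by_cases h1 : i < j
          · simp [h1, h2, h3, h0]
          · simp [h1, h2, h3]
    rw [Finset.sum_congr rfl (fun i _ => Finset.sum_congr rfl (fun j _ => e1 i j))] at h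
    have e2 : ∀ i : Fin n, (∑ j : Fin n,
        if ¬ (i:ℕ) = n-1 then (if (j:ℕ) = n-1 then Q (-a) else 0) else 0)
          = (if ¬ (i:ℕ) = n-1 then Q (-a) else 0) := by
      intro i
      by_cases h2 : (i:ℕ) = n-1
      · simp [h2]
      · simp only [h2, not_false_iff, if_true]
        exact sum_ite_val n (n-1) (by omega) (Q (-a))
    rw [Finset.sum_congr rfl (fun i _ => e2 i), sum_ite_val_not n (n-1) (by omega) (Q (-a))] at h
    have e3 : ∀ i : Fin n, Q (a - n • (if (i:ℕ) = n-1 then a else 0))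
        = (if (i:ℕ) = n-1 then Q (a - n • a) - Q a else 0) + Q a := by
      intro i; by_cases h2 : (i:ℕ) = n-1 <;> simp [h2]
    rw [Finset.sum_congr rfl (fun i _ => e3 i), Finset.sum_add_distrib,
      sum_ite_val n (n-1) (by omega) _, Finset.sum_const, Finset.card_univ, Fintype.card_fin] at h
    exact h
  -- ## evenness
  have heven : ∀ z : U, Q (-z) = Q z := by
    intro a
    have h3 : n • ((n-1) • Q (-a)) = n • ((n-1) • Q a) := (hSl a).trans (hS2 a).symm
    rw [smul_smul, smul_smul, nat_smul, nat_smul] at h3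
    refine rcancel _ ?_ _ _ h3
    have hpos : 0 < n * (n-1) := Nat.mul_pos (by omega) (by omega)
    exact Nat.cast_ne_zero.2 (by omega)
  -- ## full double-sum form
  have hfull : ∀ x : Fin n → U, n • (∑ i : Fin n, ∑ j : Fin n, Q (x i - x j))
      = 2 • ∑ i : Fin n, Q ((∑ j : Fin n, x j) - n • x i) := by
    intro x
    have h := hQ x
    rw [sum_pairs] at h
    have tri : ∀ i j : Fin n, Q (x i - x j)
        = (if i < j then Q (x i - x j) else 0) + ((if j < i then Q (x i - x j) else 0)
            + (if i = j then Q (x i - x j) else 0)) := by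
      intro i j
      rcases lt_trichotomy i j with hh | hh | hh
      · simp [hh, asymm hh, hh.ne]
      · simp [hh, lt_irrefl]
      · simp [hh, asymm hh, hh.ne']
    have hsum : ∑ i : Fin n, ∑ j : Fin n, Q (x i - x j)
        = (∑ i : Fin n, ∑ j : Fin n, if i < j then Q (x i - x j) else 0)
          + ((∑ i : Fin n, ∑ j : Fin n, if j < i then Q (x i - x j) else 0)
            + (∑ i : Fin n, ∑ j : Fin n, if i = j then Q (x i - x j) else 0)) := by
      rw [Finset.sum_congr rfl (fun i _ => Finset.sum_congr rfl (fun j _ => tri i j))]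
      simp [Finset.sum_add_distrib]
    have hdiag : ∑ i : Fin n, ∑ j : Fin n, (if i = j then Q (x i - x j) else 0) = 0 := by
      refine Finset.sum_eq_zero (fun i _ => ?_)
      rw [Finset.sum_ite_eq Finset.univ i (fun j => Q (x i - x j))]
      simp [h0]
    have hlow : ∑ i : Fin n, ∑ j : Fin n, (if j < i then Q (x i - x j) else 0)
        = ∑ i : Fin n, ∑ j : Fin n, (if i < j then Q (x i - x j) else 0) := by
      rw [Finset.sum_comm]
      refine Finset.sum_congr rfl (fun i _ => Finset.sum_congr rfl (fun j _ => ?_))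
      by_cases hh : i < j
      · rw [if_pos hh, if_pos hh, ← heven (x i - x j), neg_sub]
      · rw [if_neg hh, if_neg hh]
    rw [hsum, hdiag, hlow, add_zero, ← two_smul ℕ, smul_comm, h]
  -- ## 3-support master identity
  have hM3 : ∀ u v w : U,
      (n:ℝ) • ((2:ℝ) • Q (u-v) + (2:ℝ) • Q (u-w) + (2:ℝ) • Q (v-w)
          + (2*(n:ℝ)-6) • (Q u + Q v + Q w))
        = (2:ℝ) • (Q (u+v+w - n•u) + Q (u+v+w - n•v) + Q (u+v+w - n•w)
          + ((n:ℝ)-3) • Q (u+v+w)) := by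
    intro u v w
    have h := hfull (fun i => if (i:ℕ) = 0 then u else if (i:ℕ) = 1 then v
      else if (i:ℕ) = 2 then w else 0)
    rw [sum_split n 3 (by omega)
      (fun t => if t = 0 then u else if t = 1 then v else if t = 2 then w else 0) 0
      (by intro t ht
          simp only [if_neg (show ¬ t = 0 by omega), if_neg (show ¬ t = 1 by omega),
            if_neg (show ¬ t = 2 by omega)])] at h
    rw [show (∑ t ∈ Finset.range 3, (if t = 0 then u else if t = 1 then v
        else if t = 2 then w else 0)) + (n-3) • (0:U) = u + v + w by
      norm_num [Finset.sum_range_succ]] at h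
    rw [sum_split n 3 (by omega)
      (fun t => Q (u + v + w - n • (if t = 0 then u else if t = 1 then v
        else if t = 2 then w else 0))) (Q (u + v + w))
      (by intro t ht
          simp only [if_neg (show ¬ t = 0 by omega), if_neg (show ¬ t = 1 by omega),
            if_neg (show ¬ t = 2 by omega), smul_zero, sub_zero])] at h
    rw [show (∑ t ∈ Finset.range 3, Q (u + v + w - n • (if t = 0 then u else if t = 1 then v
          else if t = 2 then w else 0))) + (n-3) • Q (u + v + w)
        = Q (u + v + w - n • u) + Q (u + v + w - n • v) + Q (u + v + w - n • w)
          + (n-3) • Q (u + v + w) by norm_num [Finset.sum_range_succ]] at h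
    rw [Finset.sum_congr rfl (fun (i : Fin n) _ => sum_split n 3 (by omega)
      (fun t => Q ((if (i:ℕ) = 0 then u else if (i:ℕ) = 1 then v else if (i:ℕ) = 2 then w
          else 0) - (if t = 0 then u else if t = 1 then v else if t = 2 then w else 0)))
      (Q (if (i:ℕ) = 0 then u else if (i:ℕ) = 1 then v else if (i:ℕ) = 2 then w else 0))
      (by intro t ht
          simp only [if_neg (show ¬ t = 0 by omega), if_neg (show ¬ t = 1 by omega),
            if_neg (show ¬ t = 2 by omega), sub_zero]))] at h
    rw [show (∑ i : Fin n, ((∑ t ∈ Finset.range 3,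
          Q ((if (i:ℕ) = 0 then u else if (i:ℕ) = 1 then v else if (i:ℕ) = 2 then w else 0)
            - (if t = 0 then u else if t = 1 then v else if t = 2 then w else 0)))
          + (n-3) • Q (if (i:ℕ) = 0 then u else if (i:ℕ) = 1 then v
              else if (i:ℕ) = 2 then w else 0)))
        = ∑ i : Fin n, ((fun s => Q ((if s = 0 then u else if s = 1 then v
            else if s = 2 then w else 0) - u)
          + Q ((if s = 0 then u else if s = 1 then v else if s = 2 then w else 0) - v)
          + Q ((if s = 0 then u else if s = 1 then v else if s = 2 then w else 0) - w)
          + (n-3) • Q (if s = 0 then u else if s = 1 then v else if s = 2 then w else 0))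
            (i:ℕ)) from Finset.sum_congr rfl (fun i _ => by norm_num [Finset.sum_range_succ])]
      at h
    rw [sum_split n 3 (by omega)
      (fun s => Q ((if s = 0 then u else if s = 1 then v else if s = 2 then w else 0) - u)
        + Q ((if s = 0 then u else if s = 1 then v else if s = 2 then w else 0) - v)
        + Q ((if s = 0 then u else if s = 1 then v else if s = 2 then w else 0) - w)
        + (n-3) • Q (if s = 0 then u else if s = 1 then v else if s = 2 then w else 0))
      (Q (0 - u) + Q (0 - v) + Q (0 - w) + (n-3) • Q 0)
      (by intro t ht
          simp only [if_neg (show ¬ t = 0 by omega), if_neg (show ¬ t = 1 by omega),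
            if_neg (show ¬ t = 2 by omega)])] at h
    rw [show (∑ t ∈ Finset.range 3, (Q ((if t = 0 then u else if t = 1 then v
          else if t = 2 then w else 0) - u)
        + Q ((if t = 0 then u else if t = 1 then v else if t = 2 then w else 0) - v)
        + Q ((if t = 0 then u else if t = 1 then v else if t = 2 then w else 0) - w)
        + (n-3) • Q (if t = 0 then u else if t = 1 then v else if t = 2 then w else 0)))
        = (Q (u - u) + Q (u - v) + Q (u - w) + (n-3) • Q u)
          + (Q (v - u) + Q (v - v) + Q (v - w) + (n-3) • Q v)
          + (Q (w - u) + Q (w - v) + Q (w - w) + (n-3) • Q w) by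
      norm_num [Finset.sum_range_succ]] at h
    rw [show v - u = -(u - v) by abel, show w - u = -(u - w) by abel,
      show w - v = -(v - w) by abel, heven (u-v), heven (u-w), heven (v-w)] at h
    simp only [sub_self, zero_sub, h0, heven u, heven v, heven w] at h
    simp only [nat_smul, smul_zero, add_zero, zero_add] at h
    rw [Nat.cast_sub hn] at h
    push_cast at h
    linear_combination (norm := module) h
  -- ## F11
  have hF11 : ∀ z : U, (n:ℝ) • ((2:ℝ) • Q (z+z) + (4*(n:ℝ)-8) • Q z) = (4:ℝ) • Q (n • z) := by
    intro z
    have h := hM3 z (-z) 0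
    rw [show z - -z = z + z by abel, sub_zero, sub_zero, heven z,
      show z + -z + (0:U) = 0 by abel] at h
    rw [zero_sub, heven (n • z), smul_neg, sub_neg_eq_add, zero_add, smul_zero, sub_zero,
      h0] at h
    linear_combination (norm := module) h
  -- ## Q (2z) = 4 Q z
  have hq2 : ∀ z : U, Q (z + z) = (4:ℝ) • Q z := by
    rcases Nat.lt_or_ge n 4 with h4 | h4
    · -- n = 3
      have hn3 : n = 3 := by omega
      intro z
      have h := hS2 z
      rw [hn3] at h
      rw [show (3-1 : ℕ) = 2 from rfl, show z - (3:ℕ) • z = -(z + z) by abel,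
        heven (z+z)] at h
      simp only [nat_smul] at h
      push_cast at h
      linear_combination (norm := module) -h
    · -- n ≥ 4 : use the 4-support config (z, z, -z, -z, 0, ..., 0)
      intro z
      have h := hfull (fun i => if (i:ℕ) = 0 then z else if (i:ℕ) = 1 then z
        else if (i:ℕ) = 2 then -z else if (i:ℕ) = 3 then -z else 0)
      rw [sum_split n 4 (by omega)
        (fun t => if t = 0 then z else if t = 1 then z else if t = 2 then -z
          else if t = 3 then -z else 0) 0
        (by intro t ht
            simp only [if_neg (show ¬ t = 0 by omega), if_neg (show ¬ t = 1 by omega),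
              if_neg (show ¬ t = 2 by omega), if_neg (show ¬ t = 3 by omega)])] at h
      rw [show (∑ t ∈ Finset.range 4, (if t = 0 then z else if t = 1 then z
          else if t = 2 then -z else if t = 3 then -z else 0)) + (n-4) • (0:U) = 0 by
        norm_num [Finset.sum_range_succ]] at h
      rw [sum_split n 4 (by omega)
        (fun t => Q ((0:U) - n • (if t = 0 then z else if t = 1 then z else if t = 2 then -z
          else if t = 3 then -z else 0))) (Q (0:U))
        (by intro t ht
            simp only [if_neg (show ¬ t = 0 by omega), if_neg (show ¬ t = 1 by omega),
              if_neg (show ¬ t = 2 by omega), if_neg (show ¬ t = 3 by omega), smul_zero,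
              sub_zero])] at h
      rw [show (∑ t ∈ Finset.range 4, Q ((0:U) - n • (if t = 0 then z else if t = 1 then z
            else if t = 2 then -z else if t = 3 then -z else 0))) + (n-4) • Q (0:U)
          = Q ((0:U) - n • z) + Q ((0:U) - n • z) + Q ((0:U) - n • (-z))
            + Q ((0:U) - n • (-z)) + (n-4) • Q (0:U) by
        norm_num [Finset.sum_range_succ]] at h
      rw [Finset.sum_congr rfl (fun (i : Fin n) _ => sum_split n 4 (by omega)
        (fun t => Q ((if (i:ℕ) = 0 then z else if (i:ℕ) = 1 then z else if (i:ℕ) = 2 then -z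
            else if (i:ℕ) = 3 then -z else 0)
          - (if t = 0 then z else if t = 1 then z else if t = 2 then -z
            else if t = 3 then -z else 0)))
        (Q (if (i:ℕ) = 0 then z else if (i:ℕ) = 1 then z else if (i:ℕ) = 2 then -z
            else if (i:ℕ) = 3 then -z else 0))
        (by intro t ht
            simp only [if_neg (show ¬ t = 0 by omega), if_neg (show ¬ t = 1 by omega),
              if_neg (show ¬ t = 2 by omega), if_neg (show ¬ t = 3 by omega), sub_zero]))] at h
      rw [show (∑ i : Fin n, ((∑ t ∈ Finset.range 4,
            Q ((if (i:ℕ) = 0 then z else if (i:ℕ) = 1 then z else if (i:ℕ) = 2 then -z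
              else if (i:ℕ) = 3 then -z else 0)
            - (if t = 0 then z else if t = 1 then z else if t = 2 then -z
              else if t = 3 then -z else 0)))
            + (n-4) • Q (if (i:ℕ) = 0 then z else if (i:ℕ) = 1 then z
              else if (i:ℕ) = 2 then -z else if (i:ℕ) = 3 then -z else 0)))
          = ∑ i : Fin n, ((fun s => Q ((if s = 0 then z else if s = 1 then z
              else if s = 2 then -z else if s = 3 then -z else 0) - z)
            + Q ((if s = 0 then z else if s = 1 then z else if s = 2 then -z
              else if s = 3 then -z else 0) - z)
            + Q ((if s = 0 then z else if s = 1 then z else if s = 2 then -z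
              else if s = 3 then -z else 0) - (-z))
            + Q ((if s = 0 then z else if s = 1 then z else if s = 2 then -z
              else if s = 3 then -z else 0) - (-z))
            + (n-4) • Q (if s = 0 then z else if s = 1 then z else if s = 2 then -z
              else if s = 3 then -z else 0)) (i:ℕ))
          from Finset.sum_congr rfl (fun i _ => by norm_num [Finset.sum_range_succ])] at h
      rw [sum_split n 4 (by omega)
        (fun s => Q ((if s = 0 then z else if s = 1 then z
              else if s = 2 then -z else if s = 3 then -z else 0) - z)
            + Q ((if s = 0 then z else if s = 1 then z else if s = 2 then -z
              else if s = 3 then -z else 0) - z)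
            + Q ((if s = 0 then z else if s = 1 then z else if s = 2 then -z
              else if s = 3 then -z else 0) - (-z))
            + Q ((if s = 0 then z else if s = 1 then z else if s = 2 then -z
              else if s = 3 then -z else 0) - (-z))
            + (n-4) • Q (if s = 0 then z else if s = 1 then z else if s = 2 then -z
              else if s = 3 then -z else 0))
        (Q ((0:U) - z) + Q ((0:U) - z) + Q ((0:U) - (-z)) + Q ((0:U) - (-z)) + (n-4) • Q (0:U))
        (by intro t ht
            simp only [if_neg (show ¬ t = 0 by omega), if_neg (show ¬ t = 1 by omega),
              if_neg (show ¬ t = 2 by omega), if_neg (show ¬ t = 3 by omega)])] at h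
      rw [show (∑ t ∈ Finset.range 4, ((fun s => Q ((if s = 0 then z else if s = 1 then z
              else if s = 2 then -z else if s = 3 then -z else 0) - z)
            + Q ((if s = 0 then z else if s = 1 then z else if s = 2 then -z
              else if s = 3 then -z else 0) - z)
            + Q ((if s = 0 then z else if s = 1 then z else if s = 2 then -z
              else if s = 3 then -z else 0) - (-z))
            + Q ((if s = 0 then z else if s = 1 then z else if s = 2 then -z
              else if s = 3 then -z else 0) - (-z))
            + (n-4) • Q (if s = 0 then z else if s = 1 then z else if s = 2 then -z
              else if s = 3 then -z else 0)) t))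
          = (Q (z - z) + Q (z - z) + Q (z - (-z)) + Q (z - (-z)) + (n-4) • Q z)
            + (Q (z - z) + Q (z - z) + Q (z - (-z)) + Q (z - (-z)) + (n-4) • Q z)
            + (Q (-z - z) + Q (-z - z) + Q (-z - (-z)) + Q (-z - (-z)) + (n-4) • Q (-z))
            + (Q (-z - z) + Q (-z - z) + Q (-z - (-z)) + Q (-z - (-z)) + (n-4) • Q (-z)) by
        norm_num [Finset.sum_range_succ]] at h
      simp only [show z - -z = z + z by abel, show -z - z = -(z + z) by abel, sub_self,
        smul_neg, sub_neg_eq_add, zero_add, zero_sub, h0, heven z, heven (z + z),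
        heven (n • z), smul_zero, add_zero] at h
      simp only [nat_smul] at h
      rw [Nat.cast_sub h4] at h
      push_cast at h
      have h4R : (4:ℝ) ≤ (n:ℝ) := by exact_mod_cast h4
      have hF := hF11 z
      have hgoal : (2*(n:ℝ)) • Q (z+z) = (2*(n:ℝ)) • ((4:ℝ) • Q z) := by
        linear_combination (norm := module) (2⁻¹:ℝ) • h - hF
      exact rcancel _ (by positivity) _ _ hgoal
  -- ## Q (n z) = n^2 Q z
  have hqn : ∀ z : U, Q (n • z) = ((n:ℝ)^2) • Q z := by
    intro z
    have h1 := hF11 z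
    have h2 := hq2 z
    have hgoal : (4:ℝ) • Q (n • z) = (4:ℝ) • (((n:ℝ)^2) • Q z) := by
      linear_combination (norm := module) -h1 + (2*(n:ℝ)) • h2
    exact rcancel _ (by norm_num) _ _ hgoal
  -- ## the base equation N
  refine ⟨h0, heven, fun u v => ?_⟩
  have h := hM3 u v (-u - v)
  rw [show u - (-u - v) = u + u + v by abel, show v - (-u - v) = u + v + v by abel,
    show u + v + (-u - v) = (0:U) by abel, show (-u - v : U) = -(u + v) by abel,
    heven (u + v), smul_neg, sub_neg_eq_add, zero_add, zero_sub, zero_sub, heven (n • u),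
    heven (n • v), h0, smul_zero, add_zero, hqn u, hqn v, hqn (u + v)] at h
  have hgoal : (n:ℝ) • (Q (u - v) + Q (u + u + v) + Q (u + v + v))
      = (n:ℝ) • ((3:ℝ) • Q u + (3:ℝ) • Q v + (3:ℝ) • Q (u + v)) := by
    linear_combination (norm := module) (2⁻¹:ℝ) • h
  have hne : (n:ℝ) ≠ 0 := by
    have : (0:ℝ) < n := by exact_mod_cast (show 0 < n by omega)
    exact ne_of_gt this
  exact rcancel _ hne _ _ hgoal

private lemma step2 {U V : Type*} [AddCommGroup U] [AddCommGroup V] [Module ℝ V]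
    (Q : U → V) (h0 : Q 0 = 0) (heven : ∀ z : U, Q (-z) = Q z)
    (hN : ∀ u v : U, Q (u - v) + Q (u + u + v) + Q (u + v + v)
      = (3:ℝ) • Q u + (3:ℝ) • Q v + (3:ℝ) • Q (u + v)) :
    ∀ x y : U, Q (x + y) + Q (x - y) = (2:ℝ) • Q x + (2:ℝ) • Q y := by
  have rcancel : ∀ (r : ℝ), r ≠ 0 → ∀ a b : V, r • a = r • b → a = b :=
    fun r hr a b h => smul_right_injective V hr h
  -- Q(2z) = 4 Q(z)
  have hq2 : ∀ z : U, Q (z + z) = (4:ℝ) • Q z := by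
    intro z
    have h := hN z (-z)
    rw [show z - -z = z + z by abel, show z + z + -z = z by abel,
      show z + -z + -z = -z by abel, show z + -z = (0:U) by abel, heven z, h0] at h
    linear_combination (norm := module) h
  -- R : D(3x,y) = 3 D(x,y)
  have hR : ∀ x y : U, Q (x+x+x+y) + Q (x+x+x-y)
      = (3:ℝ) • Q (x+y) + (3:ℝ) • Q (x-y) + (12:ℝ) • Q x - (4:ℝ) • Q y := by
    intro x y
    have h := hN (x+y) (x-y)
    rw [show x + y - (x - y) = y + y by abel, show x + y + (x + y) + (x - y) = x+x+x+y by abel,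
      show x + y + (x - y) + (x - y) = x+x+x-y by abel, show x + y + (x - y) = x + x by abel,
      hq2 x, hq2 y] at h
    linear_combination (norm := module) h
  -- TT : D(x,2y) = D(2x,y)
  have hTT : ∀ x y : U, Q (x+y+y) + Q (x-y-y) + (6:ℝ) • Q x
      = Q (x+x+y) + Q (x+x-y) + (6:ℝ) • Q y := by
    intro x y
    have hT := hN (x+y) x
    rw [show x + y - x = y by abel, show x + y + (x + y) + x = x+x+x+y+y by abel,
      show x + y + x + x = x+x+x+y by abel, show x + y + x = x+x+y by abel] at hT
    have hT' := hN (x-y) x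
    rw [show x - y - x = -y by abel, show x - y + (x - y) + x = x+x+x-y-y by abel,
      show x - y + x + x = x+x+x-y by abel, show x - y + x = x+x-y by abel, heven y] at hT'
    have r1 := hR x y
    have r2 := hR x (y+y)
    rw [show x+x+x+(y+y) = x+x+x+y+y by abel, show x+x+x-(y+y) = x+x+x-y-y by abel,
      show x+(y+y) = x+y+y by abel, show x-(y+y) = x-y-y by abel, hq2 y] at r2
    have hgoal : (3:ℝ) • (Q (x+y+y) + Q (x-y-y) + (6:ℝ) • Q x)
        = (3:ℝ) • (Q (x+x+y) + Q (x+x-y) + (6:ℝ) • Q y) := by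
      linear_combination (norm := module) hT + hT' - r1 - r2
    exact rcancel _ (by norm_num) _ _ hgoal
  -- O : D(2x,y) + D(x,2y) = 2 D(x,y)
  have hO : ∀ x y : U, Q (x+x+y) + Q (x+x-y) + Q (x+y+y) + Q (x-y-y)
      = (6:ℝ) • Q x + (6:ℝ) • Q y + (2:ℝ) • Q (x+y) + (2:ℝ) • Q (x-y) := by
    intro x y
    have h1 := hN x y
    have h2 := hN x (-y)
    rw [show x - -y = x + y by abel, show x + x + -y = x + x - y by abel,
      show x + -y + -y = x - y - y by abel, show x + -y = x - y by abel, heven y] at h2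
    linear_combination (norm := module) h1 + h2
  -- db : D(2x,y) = D(x,y)
  have hdb : ∀ x y : U, Q (x+x+y) + Q (x+x-y) = Q (x+y) + Q (x-y) + (6:ℝ) • Q x := by
    intro x y
    have hgoal : (2:ℝ) • (Q (x+x+y) + Q (x+x-y))
        = (2:ℝ) • (Q (x+y) + Q (x-y) + (6:ℝ) • Q x) := by
      linear_combination (norm := module) hO x y - hTT x y
    exact rcancel _ (by norm_num) _ _ hgoal
  -- final parallelogram
  intro x y
  have d1 := hdb x y
  have d2 := hdb (x+x) y
  rw [show x+x+(x+x)+y = x+x+x+x+y by abel, show x+x+(x+x)-y = x+x+x+x-y by abel,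
    show x+x+y = x+x+y from rfl, hq2 x] at d2
  have V1 := hN (x+x) y
  rw [show x+x+(x+x)+y = x+x+x+x+y by abel, show x+x+y+y = x+x+y+y from rfl, hq2 x] at V1
  have V2 := hN (x+x) (-y)
  rw [show x+x - -y = x+x+y by abel, show x+x+(x+x)+ -y = x+x+x+x-y by abel,
    show x+x+ -y + -y = x+x-y-y by abel, show x+x+ -y = x+x-y by abel, heven y, hq2 x] at V2
  have q2xy := hq2 (x+y)
  rw [show x+y+(x+y) = x+x+y+y by abel] at q2xy
  have q2xmy := hq2 (x-y)
  rw [show x-y+(x-y) = x+x-y-y by abel] at q2xmy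
  have hgoal : (3:ℝ) • (Q (x+y) + Q (x-y)) = (3:ℝ) • ((2:ℝ) • Q x + (2:ℝ) • Q y) := by
    linear_combination (norm := module) d1 - d2 + V1 + V2 - q2xy - q2xmy
  exact rcancel _ (by norm_num) _ _ hgoal

private lemma step3 {U V : Type*} [AddCommGroup U] [AddCommGroup V] [Module ℝ V]
    (Q : U → V) (h0 : Q 0 = 0) (heven : ∀ z : U, Q (-z) = Q z)
    (hpar : ∀ x y : U, Q (x + y) + Q (x - y) = (2:ℝ) • Q x + (2:ℝ) • Q y) :
    ∃ B : U → U → V,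
      (∀ x y : U, B x y = B y x) ∧
      (∀ x y z : U, B (x + y) z = B x z + B y z) ∧
      (∀ x y z : U, B x (y + z) = B x y + B x z) ∧
      (∀ x : U, Q x = B x x) := by
  have hsymm : ∀ x y : U, (4⁻¹:ℝ) • (Q (x + y) - Q (x - y))
      = (4⁻¹:ℝ) • (Q (y + x) - Q (y - x)) := by
    intro x y
    rw [show y + x = x + y by abel, show y - x = -(x - y) by abel, heven (x - y)]
  have haddl : ∀ x y z : U, (4⁻¹:ℝ) • (Q (x + y + z) - Q (x + y - z))
      = (4⁻¹:ℝ) • (Q (x + z) - Q (x - z)) + (4⁻¹:ℝ) • (Q (y + z) - Q (y - z)) := by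
    intro x y z
    have h1 := hpar (x + z) y
    rw [show x + z + y = x + y + z by abel, show x + z - y = x - y + z by abel] at h1
    have h2 := hpar (x - z) y
    rw [show x - z + y = x + y - z by abel, show x - z - y = x - y - z by abel] at h2
    have h3 := hpar (y + z) x
    rw [show y + z + x = x + y + z by abel, show y + z - x = -(x - y - z) by abel,
      heven (x - y - z)] at h3
    have h4 := hpar (y - z) x
    rw [show y - z + x = x + y - z by abel, show y - z - x = -(x - y + z) by abel,
      heven (x - y + z)] at h4
    have hgoal : (2:ℝ) • ((4⁻¹:ℝ) • (Q (x + y + z) - Q (x + y - z)))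
        = (2:ℝ) • ((4⁻¹:ℝ) • (Q (x + z) - Q (x - z))
            + (4⁻¹:ℝ) • (Q (y + z) - Q (y - z))) := by
      linear_combination (norm := module) (4⁻¹:ℝ) • h1 - (4⁻¹:ℝ) • h2 + (4⁻¹:ℝ) • h3
        - (4⁻¹:ℝ) • h4
    exact smul_right_injective V (by norm_num : (2:ℝ) ≠ 0) hgoal
  refine ⟨fun x y => (4⁻¹:ℝ) • (Q (x + y) - Q (x - y)), fun x y => hsymm x y, ?_, ?_, ?_⟩
  · intro x y z
    exact haddl x y z
  · intro x y z
    calc (4⁻¹:ℝ) • (Q (x + (y + z)) - Q (x - (y + z)))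
        = (4⁻¹:ℝ) • (Q (y + z + x) - Q (y + z - x)) := by
          rw [show y + z + x = x + (y + z) by abel, show y + z - x = -(x - (y + z)) by abel,
            heven (x - (y + z))]
      _ = (4⁻¹:ℝ) • (Q (y + x) - Q (y - x)) + (4⁻¹:ℝ) • (Q (z + x) - Q (z - x)) :=
          haddl y z x
      _ = (4⁻¹:ℝ) • (Q (x + y) - Q (x - y)) + (4⁻¹:ℝ) • (Q (x + z) - Q (x - z)) := by
          rw [← hsymm x y, ← hsymm x z]
  · intro x
    have hq := hpar x x
    rw [sub_self, h0, add_zero] at hq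
    show Q x = (4⁻¹:ℝ) • (Q (x + x) - Q (x - x))
    rw [sub_self, h0, sub_zero]
    linear_combination (norm := module) -((4⁻¹:ℝ) • hq)

/-- If `Q` between real vector spaces satisfies equation (E_n) for an
integer `n ≥ 3`, then there is a symmetric biadditive `B` with `Q(x) = B(x,x)`. -/
theorem stmt_4 {U V : Type*} [AddCommGroup U] [Module ℝ U] [AddCommGroup V] [Module ℝ V]
    (n : ℕ) (hn : 3 ≤ n) (Q : U → V) (hQ : SatisfiesEn n Q) :
    ∃ B : U → U → V,
      (∀ x y : U, B x y = B y x) ∧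
      (∀ x y z : U, B (x + y) z = B x z + B y z) ∧
      (∀ x y z : U, B x (y + z) = B x y + B x z) ∧
      (∀ x : U, Q x = B x x) := by
  obtain ⟨h0, heven, hN⟩ := step1 n hn Q hQ
  exact step3 Q h0 heven (step2 Q h0 heven hN)
end

section
/- Let U be a real normed linear space and let a be a fixed integer with |a| ≠ 1. Then the norm of U arises from an inner product (i.e. there exists an inner product ⟨·,·⟩ on U with ⟨x,x⟩ = ‖x‖² for all x ∈ U) if and only if ‖ax+y‖² + ‖x+ay‖² + (a−1)‖x−y‖² = (a+1)‖x+y‖² + (a²−1)(‖x‖² + ‖y‖²) for all x, y ∈ U. -/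
private lemma ns_sq {U : Type*} [NormedAddCommGroup U] [NormedSpace ℝ U]
    (t : ℝ) (v : U) : ‖t • v‖ ^ 2 = t ^ 2 * ‖v‖ ^ 2 := by
  rw [norm_smul, Real.norm_eq_abs, mul_pow, sq_abs]

private lemma key_para {U : Type*} [NormedAddCommGroup U] [NormedSpace ℝ U]
    (c : ℝ) (hc : c ^ 2 ≠ 1)
    (h : ∀ x y : U, ‖c • x + y‖ ^ 2 + ‖x + c • y‖ ^ 2 + (c - 1) * ‖x - y‖ ^ 2
        = (c + 1) * ‖x + y‖ ^ 2 + (c ^ 2 - 1) * (‖x‖ ^ 2 + ‖y‖ ^ 2)) :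
    ∀ x y : U, ‖x + y‖ ^ 2 + ‖x - y‖ ^ 2 = 2 * (‖x‖ ^ 2 + ‖y‖ ^ 2) := by
  -- Step 1: the identity for the scalar c^2, up to a multiple of the parallelogram defect.
  have h1 : ∀ x y : U, ‖(c ^ 2) • x + y‖ ^ 2 + ‖x + (c ^ 2) • y‖ ^ 2
      = 2 * ‖x + y‖ ^ 2 - 2 * (c ^ 2 - 1) * ‖x - y‖ ^ 2
        + (2 * (c ^ 2 - 1) + (c ^ 2) ^ 2 - 1) * (‖x‖ ^ 2 + ‖y‖ ^ 2) := by
    intro x y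
    have e1 := h x (c • y)
    have e2 := h (c • x) y
    have e3 := h x y
    have e4 := h x (-y)
    rw [show c • x + c • y = c • (x + y) from (smul_add c x y).symm, smul_smul,
      ← pow_two] at e1
    simp only [ns_sq] at e1
    rw [smul_smul, ← pow_two,
      show c • x + c • y = c • (x + y) from (smul_add c x y).symm] at e2
    simp only [ns_sq] at e2
    simp only [smul_neg, ← sub_eq_add_neg, sub_neg_eq_add, norm_neg] at e4
    linear_combination e1 + e2 + (c + 1) * e3 - (c - 1) * e4
  -- Step 2: the quadratic scaling relation for the parallelogram defect.
  have h2 : ∀ x y : U, ‖(c ^ 2 + 1) • x + (c ^ 2 - 1) • y‖ ^ 2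
      + ‖(c ^ 2 + 1) • x - (c ^ 2 - 1) • y‖ ^ 2
      - 2 * (c ^ 2 + 1) ^ 2 * ‖x‖ ^ 2 - 2 * (c ^ 2 - 1) ^ 2 * ‖y‖ ^ 2
      = (c ^ 2 - 1) * (c ^ 2 + 3)
        * (‖x + y‖ ^ 2 + ‖x - y‖ ^ 2 - 2 * ‖x‖ ^ 2 - 2 * ‖y‖ ^ 2) := by
    intro x y
    have e := h1 (x + y) (x - y)
    rw [show (c ^ 2) • (x + y) + (x - y) = (c ^ 2 + 1) • x + (c ^ 2 - 1) • y by module,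
      show (x + y) + (c ^ 2) • (x - y) = (c ^ 2 + 1) • x - (c ^ 2 - 1) • y by module,
      show (x + y) + (x - y) = (2 : ℝ) • x by module,
      show (x + y) - (x - y) = (2 : ℝ) • y by module, ns_sq, ns_sq] at e
    linear_combination e
  -- Step 3: combine the relation with its symmetric version.
  intro x y
  have e5 := h2 ((c ^ 2 - 1) • x) ((c ^ 2 + 1) • y)
  rw [show (c ^ 2 + 1) • ((c ^ 2 - 1) • x) + (c ^ 2 - 1) • ((c ^ 2 + 1) • y)
        = ((c ^ 2 + 1) * (c ^ 2 - 1)) • (x + y) by module,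
    show (c ^ 2 + 1) • ((c ^ 2 - 1) • x) - (c ^ 2 - 1) • ((c ^ 2 + 1) • y)
        = ((c ^ 2 + 1) * (c ^ 2 - 1)) • (x - y) by module] at e5
  simp only [ns_sq] at e5
  have e6 := h2 y x
  rw [show (c ^ 2 + 1) • y + (c ^ 2 - 1) • x = (c ^ 2 - 1) • x + (c ^ 2 + 1) • y from
      add_comm _ _,
    norm_sub_rev ((c ^ 2 + 1) • y) ((c ^ 2 - 1) • x),
    show y + x = x + y from add_comm _ _, norm_sub_rev y x] at e6
  have hQ : (-4 : ℝ) * (c ^ 2 - 1) ^ 2 * (c ^ 2 + 2)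
      * (‖x + y‖ ^ 2 + ‖x - y‖ ^ 2 - 2 * ‖x‖ ^ 2 - 2 * ‖y‖ ^ 2) = 0 := by
    linear_combination e5 + ((c ^ 2 - 1) * (c ^ 2 + 3)) * e6
  have hne : (-4 : ℝ) * (c ^ 2 - 1) ^ 2 * (c ^ 2 + 2) ≠ 0 := by
    have h2 : (0:ℝ) < c ^ 2 + 2 := by positivity
    have h3 : c ^ 2 - 1 ≠ 0 := sub_ne_zero.mpr hc
    have h4 : (c ^ 2 - 1) ^ 2 ≠ 0 := pow_ne_zero _ h3
    intro h0
    rcases mul_eq_zero.mp h0 with h0 | h0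
    · rcases mul_eq_zero.mp h0 with h0 | h0
      · norm_num at h0
      · exact h4 h0
    · linarith
  have := (mul_eq_zero.mp hQ).resolve_left hne
  linarith

/-- For a real normed space `U` and a fixed integer `a` with `|a| ≠ 1`:
the norm of `U` arises from an inner product iff
`‖ax+y‖² + ‖x+ay‖² + (a−1)‖x−y‖² = (a+1)‖x+y‖² + (a²−1)(‖x‖²+‖y‖²)` for all `x, y`. -/
theorem stmt_5 {U : Type*} [NormedAddCommGroup U] [NormedSpace ℝ U]
    (a : ℤ) (ha : |a| ≠ 1) :
    (∃ inner : U → U → ℝ,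
      (∀ x y : U, inner x y = inner y x) ∧
      (∀ x y z : U, inner (x + y) z = inner x z + inner y z) ∧
      (∀ (c : ℝ) (x y : U), inner (c • x) y = c * inner x y) ∧
      (∀ x : U, x ≠ 0 → 0 < inner x x) ∧
      (∀ x : U, inner x x = ‖x‖ ^ 2)) ↔
    (∀ x y : U,
      ‖a • x + y‖ ^ 2 + ‖x + a • y‖ ^ 2 + ((a : ℝ) - 1) * ‖x - y‖ ^ 2
        = ((a : ℝ) + 1) * ‖x + y‖ ^ 2 + ((a : ℝ) ^ 2 - 1) * (‖x‖ ^ 2 + ‖y‖ ^ 2)) := by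
  constructor
  · rintro ⟨ip, hsymm, haddl, hsmull, hpos, hnorm⟩ x y
    have haddr : ∀ u v w : U, ip u (v + w) = ip u v + ip u w := fun u v w => by
      rw [hsymm, haddl, hsymm v u, hsymm w u]
    have hsmulr : ∀ (t : ℝ) (u v : U), ip u (t • v) = t * ip u v := fun t u v => by
      rw [hsymm, hsmull, hsymm]
    have hexp : ∀ (s t : ℝ) (u v : U), ‖s • u + t • v‖ ^ 2
        = s ^ 2 * ip u u + 2 * s * t * ip u v + t ^ 2 * ip v v := by
      intro s t u v
      rw [← hnorm, haddl, hsmull, hsmull, haddr, haddr, hsmulr, hsmulr, hsmulr, hsmulr,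
        hsymm v u]
      ring
    have n1 : ‖a • x + y‖ ^ 2
        = (a:ℝ)^2 * ip x x + 2*(a:ℝ)*1*ip x y + 1^2 * ip y y := by
      rw [show a • x + y = (a:ℝ) • x + (1:ℝ) • y by rw [one_smul, Int.cast_smul_eq_zsmul]]
      exact hexp _ _ _ _
    have n2 : ‖x + a • y‖ ^ 2
        = (1:ℝ)^2 * ip x x + 2*1*(a:ℝ)*ip x y + (a:ℝ)^2 * ip y y := by
      rw [show x + a • y = (1:ℝ) • x + (a:ℝ) • y by rw [one_smul, Int.cast_smul_eq_zsmul]]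
      exact hexp _ _ _ _
    have n3 : ‖x - y‖ ^ 2
        = (1:ℝ)^2 * ip x x + 2*1*(-1)*ip x y + (-1:ℝ)^2 * ip y y := by
      rw [show x - y = (1:ℝ) • x + (-1:ℝ) • y by simp [sub_eq_add_neg]]
      exact hexp _ _ _ _
    have n4 : ‖x + y‖ ^ 2
        = (1:ℝ)^2 * ip x x + 2*1*1*ip x y + (1:ℝ)^2 * ip y y := by
      rw [show x + y = (1:ℝ) • x + (1:ℝ) • y by simp]
      exact hexp _ _ _ _
    have n5 : ‖x‖ ^ 2 = ip x x := (hnorm x).symm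
    have n6 : ‖y‖ ^ 2 = ip y y := (hnorm y).symm
    rw [n1, n2, n3, n4, n5, n6]
    ring
  · intro h
    have hc : ((a : ℝ)) ^ 2 ≠ 1 := by
      intro h1
      apply ha
      have h2 : ((a ^ 2 : ℤ) : ℝ) = ((1 : ℤ) : ℝ) := by push_cast; linarith
      have h3 : a ^ 2 = 1 := Int.cast_injective h2
      have h4 : a * a = 1 := by nlinarith
      rcases mul_self_eq_one_iff.mp h4 with h5 | h5 <;> simp [h5]
    have h' : ∀ x y : U, ‖(a : ℝ) • x + y‖ ^ 2 + ‖x + (a : ℝ) • y‖ ^ 2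
        + ((a : ℝ) - 1) * ‖x - y‖ ^ 2
        = ((a : ℝ) + 1) * ‖x + y‖ ^ 2 + ((a : ℝ) ^ 2 - 1) * (‖x‖ ^ 2 + ‖y‖ ^ 2) := by
      intro x y
      have := h x y
      rwa [← Int.cast_smul_eq_zsmul ℝ a x, ← Int.cast_smul_eq_zsmul ℝ a y] at this
    have hpar := key_para (a : ℝ) hc h'
    have hpar' : ∀ x y : U, ‖x + y‖ * ‖x + y‖ + ‖x - y‖ * ‖x - y‖
        = 2 * (‖x‖ * ‖x‖ + ‖y‖ * ‖y‖) := by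
      intro x y
      have := hpar x y
      simp only [pow_two] at this
      linarith
    letI : InnerProductSpace ℝ U := InnerProductSpace.ofNorm ℝ hpar'
    refine ⟨fun x y => inner ℝ x y, fun x y => real_inner_comm y x,
      fun x y z => inner_add_left x y z, fun t x y => real_inner_smul_left x y t,
      fun x hx => ?_, fun x => real_inner_self_eq_norm_sq x⟩
    show (0:ℝ) < inner ℝ x x
    rw [real_inner_self_eq_norm_sq]
    exact pow_pos (norm_pos_iff.mpr hx) 2
end

section
/- Let U and V be real vector spaces. A mapping Q : U → V satisfies Q(2x+y) + Q(2x−y) = Q(x+y) + Q(x−y) + 6Q(x) for all x, y ∈ U if and only if Q is quadratic, i.e. Q(x+y) + Q(x−y) = 2Q(x) + 2Q(y) for all x, y ∈ U. -/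
/-- A mapping `Q` between real vector spaces satisfies
`Q(2x+y) + Q(2x−y) = Q(x+y) + Q(x−y) + 6Q(x)` for all `x, y` iff `Q` is quadratic. -/
theorem stmt_18 {U V : Type*} [AddCommGroup U] [Module ℝ U] [AddCommGroup V] [Module ℝ V]
    (Q : U → V) :
    (∀ x y : U,
      Q ((2 : ℕ) • x + y) + Q ((2 : ℕ) • x - y) = Q (x + y) + Q (x - y) + (6 : ℕ) • Q x) ↔
    (∀ x y : U, Q (x + y) + Q (x - y) = (2 : ℕ) • Q x + (2 : ℕ) • Q y) := by
  constructor
  · intro h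
    -- Q 0 = 0
    have hQ0 : Q 0 = 0 := by
      have e := h 0 0
      rw [show (2:ℕ) • (0:U) + 0 = 0 from by module, show (2:ℕ) • (0:U) - 0 = 0 from by module,
        show (0:U) + 0 = 0 from by module, show (0:U) - 0 = 0 from by module] at e
      linear_combination (norm := module) ((-1:ℝ)/6) • e
    -- Q (2x) = 4 Q x
    have h2 : ∀ x : U, Q ((2:ℕ) • x) = (4:ℕ) • Q x := by
      intro x
      have e := h x 0
      rw [show (2:ℕ) • x + 0 = (2:ℕ) • x from by module,
        show (2:ℕ) • x - 0 = (2:ℕ) • x from by module,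
        show x + (0:U) = x from by module, show x - (0:U) = x from by module] at e
      linear_combination (norm := module) ((1:ℝ)/2) • e
    -- Q (3x) = 9 Q x
    have h3 : ∀ x : U, Q ((2:ℕ) • x + x) = (9:ℕ) • Q x := by
      intro x
      have e := h x x
      rw [show (2:ℕ) • x - x = x from by module, show x + x = (2:ℕ) • x from by module,
        show x - x = (0:U) from by module, h2 x, hQ0] at e
      linear_combination (norm := module) e
    -- Q is even
    have heven : ∀ x : U, Q (-x) = Q x := by
      intro x
      have e := h x ((2:ℕ) • x)
      rw [show (2:ℕ) • x + (2:ℕ) • x = (2:ℕ) • ((2:ℕ) • x) from by module,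
        show (2:ℕ) • x - (2:ℕ) • x = (0:U) from by module,
        show x + (2:ℕ) • x = (2:ℕ) • x + x from by module,
        show x - (2:ℕ) • x = -x from by module,
        h2 ((2:ℕ) • x), h2 x, h3 x, hQ0] at e
      linear_combination (norm := module) -e
    intro x y
    have f1 := h x ((2:ℕ) • y)
    rw [show (2:ℕ) • x + (2:ℕ) • y = (2:ℕ) • (x + y) from by module,
      show (2:ℕ) • x - (2:ℕ) • y = (2:ℕ) • (x - y) from by module,
      show x + (2:ℕ) • y = (2:ℕ) • y + x from by module,
      show x - (2:ℕ) • y = -((2:ℕ) • y - x) from by module,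
      h2 (x + y), h2 (x - y), heven ((2:ℕ) • y - x)] at f1
    have f2 := h y x
    rw [show y + x = x + y from by module,
      show y - x = -(x - y) from by module, heven (x - y)] at f2
    linear_combination (norm := module) ((1:ℝ)/3) • (f1 + f2)
  · intro hq x y
    have hQ0 : Q 0 = 0 := by
      have e := hq 0 0
      rw [show (0:U) + 0 = 0 from by module, show (0:U) - 0 = 0 from by module] at e
      linear_combination (norm := module) ((-1:ℝ)/2) • e
    have heven : ∀ z : U, Q (-z) = Q z := by
      intro z
      have e := hq 0 z
      rw [show (0:U) + z = z from by module, show (0:U) - z = -z from by module, hQ0] at e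
      linear_combination (norm := module) e
    have e1 := hq (x + y) x
    rw [show x + y + x = (2:ℕ) • x + y from by module,
      show x + y - x = y from by module] at e1
    have e2 := hq (x - y) x
    rw [show x - y + x = (2:ℕ) • x - y from by module,
      show x - y - x = -y from by module] at e2
    have e3 := hq x y
    linear_combination (norm := module) e1 + e2 + e3 - heven y
end
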